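/- arXiv:1701.05500 — 3 statements merged into one kernel-verified Lean document; each statement's English description precedes it below -/
import Mathlib

section
/- Suppose a pseudo-Laman bigraph B=(G,H) with biedge set ℰ without self-loops untangles via a biedge ē∈ℰ into bigraphs B₁ and B₂, and suppose ē is a bridge in G. Then B₁ is not pseudo-Laman or B₂ is not pseudo-Laman. -/
set_option maxHeartbeats 1000000

noncomputable section
open Classical

namespace LamanPaper

variable {V E : Type}

/-- The adjacency relation induced by an incidence map `ends`. -/
def adjRel (ends : E → Sym2 V) : V → V → Prop := fun u v => ∃ e : E, ends e = s(u, v)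

/-- The setoid of connected components of the graph with incidence map `ends`. -/
def ccSetoid (ends : E → Sym2 V) : Setoid V :=
  ⟨Relation.EqvGen (adjRel ends), Relation.EqvGen.is_equivalence _⟩

/-- The number of connected components. -/
def numCC (ends : E → Sym2 V) : ℕ := Nat.card (Quotient (ccSetoid ends))

/-- The dimension of a graph: number of vertices minus number of connected components. -/
def gDim (ends : E → Sym2 V) : ℕ := Nat.card V - numCC ends

/-- Restriction of a graph to a set of edges. -/
def restrictEnds (ends : E → Sym2 V) (S : Set E) : {e : E // e ∈ S} → Sym2 V :=
  fun e => ends e.1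

/-- Deletion of a set of edges from a graph. -/
def deleteEnds (ends : E → Sym2 V) (S : Set E) : {e : E // e ∉ S} → Sym2 V :=
  fun e => ends e.1

/-- The setoid on vertices generated by contracting the edges in `S`. -/
def contrSetoid (ends : E → Sym2 V) (S : Set E) : Setoid V :=
  ⟨Relation.EqvGen fun u v => ∃ e ∈ S, ends e = s(u, v), Relation.EqvGen.is_equivalence _⟩

/-- Contraction of the edges in `S`: the remaining edges join the equivalence classes of
their endpoints. -/
def contractEnds (ends : E → Sym2 V) (S : Set E) :
    {e : E // e ∉ S} → Sym2 (Quotient (contrSetoid ends S)) :=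
  fun e => (ends e.1).map (Quotient.mk (contrSetoid ends S))

/-- An edge is a bridge if deleting it increases the number of connected components. -/
def IsBridge (ends : E → Sym2 V) (e : E) : Prop :=
  numCC ends < numCC (deleteEnds ends ({e} : Set E))

/-- The smaller endpoint of an (unordered) edge, with respect to a linear order. -/
def sMin [LinearOrder V] (s : Sym2 V) : V :=
  Sym2.lift ⟨fun a b => min a b, fun a b => min_comm a b⟩ s

/-- The larger endpoint of an (unordered) edge, with respect to a linear order. -/
def sMax [LinearOrder V] (s : Sym2 V) : V :=
  Sym2.lift ⟨fun a b => max a b, fun a b => max_comm a b⟩ s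

theorem sMin_mem [LinearOrder V] (s : Sym2 V) : sMin s ∈ s := by
  induction s using Sym2.ind with
  | _ x y => rcases min_choice x y with h | h <;> simp [sMin, Sym2.lift_mk, h, Sym2.mem_iff]

theorem sMax_mem [LinearOrder V] (s : Sym2 V) : sMax s ∈ s := by
  induction s using Sym2.ind with
  | _ x y => rcases max_choice x y with h | h <;> simp [sMax, Sym2.lift_mk, h, Sym2.mem_iff]

/-- A bigraph: a pair of finite multigraphs `G = (V, ℰ)` and `H = (W, ℰ)` sharing the same
set of (bi)edges, together with fixed total orders on the two vertex sets. -/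
structure Bigraph where
  ℰ : Type
  V : Type
  W : Type
  finE : Finite ℰ
  finV : Finite V
  finW : Finite W
  τG : ℰ → Sym2 V
  τH : ℰ → Sym2 W
  ordV : LinearOrder V
  ordW : LinearOrder W

namespace Bigraph

variable (B : Bigraph)

instance : Finite B.ℰ := B.finE
instance : Finite B.V := B.finV
instance : Finite B.W := B.finW

/-- The dimension of the first graph of a bigraph. -/
def dimG : ℕ := gDim B.τG

/-- The dimension of the second graph of a bigraph. -/
def dimH : ℕ := gDim B.τH

/-- A bigraph is pseudo-Laman if `dim G + dim H = |ℰ| + 1`. -/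
def PseudoLaman : Prop := B.dimG + B.dimH = Nat.card B.ℰ + 1

/-- A bigraph has a (self-)loop if some biedge is a self-loop in `G` or in `H`. -/
def HasLoop : Prop := (∃ e, (B.τG e).IsDiag) ∨ (∃ e, (B.τH e).IsDiag)

/-- The set `P` of ordered pairs of distinct vertices of `G` joined by some edge. -/
def Pset : Set (B.V × B.V) := {p | p.1 ≠ p.2 ∧ ∃ e, B.τG e = s(p.1, p.2)}

/-- The set `Q` of ordered pairs of distinct vertices of `H` joined by some edge. -/
def Qset : Set (B.W × B.W) := {q | q.1 ≠ q.2 ∧ ∃ e, B.τH e = s(q.1, q.2)}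

/-- The smaller endpoint (w.r.t. the fixed total order) of a biedge in `G`. -/
def eFstG (e : B.ℰ) : B.V := letI := B.ordV; sMin (B.τG e)

/-- The larger endpoint of a biedge in `G`. -/
def eSndG (e : B.ℰ) : B.V := letI := B.ordV; sMax (B.τG e)

/-- The smaller endpoint of a biedge in `H`. -/
def eFstH (e : B.ℰ) : B.W := letI := B.ordW; sMin (B.τH e)

/-- The larger endpoint of a biedge in `H`. -/
def eSndH (e : B.ℰ) : B.W := letI := B.ordW; sMax (B.τH e)

theorem eFstG_mem (e : B.ℰ) : B.eFstG e ∈ B.τG e := by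
  letI := B.ordV; exact sMin_mem _

theorem eSndG_mem (e : B.ℰ) : B.eSndG e ∈ B.τG e := by
  letI := B.ordV; exact sMax_mem _

theorem eFstH_mem (e : B.ℰ) : B.eFstH e ∈ B.τH e := by
  letI := B.ordW; exact sMin_mem _

theorem eSndH_mem (e : B.ℰ) : B.eSndH e ∈ B.τH e := by
  letI := B.ordW; exact sMax_mem _

/-- The affine solution set `Z^B(λ)` of a bigraph with distinguished biedge `ebar` and
parameters `lam`. -/
def ZSet (ebar : B.ℰ) (lam : {e : B.ℰ // e ≠ ebar} → ℂ) :
    Set ((↥B.Pset → ℂ) × (↥B.Qset → ℂ)) :=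
  {xy |
    (∀ p : ↥B.Pset, (p : B.V × B.V) = (B.eFstG ebar, B.eSndG ebar) → xy.1 p = 1) ∧
    (∀ q : ↥B.Qset, (q : B.W × B.W) = (B.eFstH ebar, B.eSndH ebar) → xy.2 q = 1) ∧
    (∀ e : {e : B.ℰ // e ≠ ebar}, ∀ p : ↥B.Pset, ∀ q : ↥B.Qset,
      (p : B.V × B.V) = (B.eFstG e.1, B.eSndG e.1) →
      (q : B.W × B.W) = (B.eFstH e.1, B.eSndH e.1) →
      xy.1 p * xy.2 q = lam e) ∧
    (∀ (n : ℕ) (u : ℕ → B.V) (w : Fin n → ↥B.Pset),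
      (∀ i : Fin n, (w i : B.V × B.V) = (u i.1, u (i.1 + 1))) → u n = u 0 →
      ∑ i, xy.1 (w i) = 0) ∧
    (∀ (n : ℕ) (u : ℕ → B.W) (w : Fin n → ↥B.Qset),
      (∀ i : Fin n, (w i : B.W × B.W) = (u i.1, u (i.1 + 1))) → u n = u 0 →
      ∑ i, xy.2 (w i) = 0)}

/-- `B` has Laman number `N` with respect to the biedge `ebar`:  there is a nonzero
polynomial `p` in the parameters such that whenever `p` does not vanish, the solution set
`Z^B(λ)` has exactly `N` elements.  By convention a bigraph containing a self-loop has
Laman number `0`. -/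
def HasLamanNumber (ebar : B.ℰ) (N : ℕ) : Prop :=
  (B.HasLoop ∧ N = 0) ∨
  (¬ B.HasLoop ∧ ∃ P : MvPolynomial {e : B.ℰ // e ≠ ebar} ℂ, P ≠ 0 ∧
    ∀ lam : {e : B.ℰ // e ≠ ebar} → ℂ, MvPolynomial.eval lam P ≠ 0 →
      (B.ZSet ebar lam).Finite ∧ Nat.card ↥(B.ZSet ebar lam) = N)

/-- The bigraph obtained by restricting the biedges to a subset `S` (both in `G` and `H`). -/
def restrict (S : Set B.ℰ) : Bigraph where
  ℰ := {e : B.ℰ // e ∈ S}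
  V := B.V
  W := B.W
  finE := Subtype.finite
  finV := B.finV
  finW := B.finW
  τG := fun e => B.τG e.1
  τH := fun e => B.τH e.1
  ordV := B.ordV
  ordW := B.ordW

/-- The bigraph `^M B = (G / M, H ∖ M)`: contract the biedges of `M` in `G` and delete them
in `H`. -/
def ctrG (M : Set B.ℰ) (ord : LinearOrder (Quotient (contrSetoid B.τG M))) : Bigraph where
  ℰ := {e : B.ℰ // e ∉ M}
  V := Quotient (contrSetoid B.τG M)
  W := B.W
  finE := Subtype.finite
  finV := Quotient.finite _
  finW := B.finW
  τG := contractEnds B.τG M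
  τH := fun e => B.τH e.1
  ordV := ord
  ordW := B.ordW

/-- The bigraph `B ^ M = (G ∖ M, H / M)`: delete the biedges of `M` in `G` and contract them
in `H`. -/
def ctrH (M : Set B.ℰ) (ord : LinearOrder (Quotient (contrSetoid B.τH M))) : Bigraph where
  ℰ := {e : B.ℰ // e ∉ M}
  V := B.V
  W := Quotient (contrSetoid B.τH M)
  finE := Subtype.finite
  finV := B.finV
  finW := Quotient.finite _
  τG := fun e => B.τG e.1
  τH := contractEnds B.τH M
  ordV := B.ordV
  ordW := ord

/-! ### Bidistances -/

/-- Symmetry of a function on `P`: `d_V(u,v) = d_V(v,u)`. -/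
def BidistSymmG (dV : ↥B.Pset → ℚ) : Prop :=
  ∀ p p' : ↥B.Pset, (p' : B.V × B.V) = ((p : B.V × B.V).2, (p : B.V × B.V).1) → dV p' = dV p

/-- Symmetry of a function on `Q`: `d_W(t,w) = d_W(w,t)`. -/
def BidistSymmH (dW : ↥B.Qset → ℚ) : Prop :=
  ∀ q q' : ↥B.Qset, (q' : B.W × B.W) = ((q : B.W × B.W).2, (q : B.W × B.W).1) → dW q' = dW q

/-- The sum condition: `d_V(u,v) + d_W(t,w) = wt(e)` for every biedge `e ≠ ebar`. -/
def BidistSum (ebar : B.ℰ) (wt : {e : B.ℰ // e ≠ ebar} → ℚ)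
    (dV : ↥B.Pset → ℚ) (dW : ↥B.Qset → ℚ) : Prop :=
  ∀ e : {e : B.ℰ // e ≠ ebar}, ∀ p : ↥B.Pset, ∀ q : ↥B.Qset,
    s((p : B.V × B.V).1, (p : B.V × B.V).2) = B.τG e.1 →
    s((q : B.W × B.W).1, (q : B.W × B.W).2) = B.τH e.1 →
    dV p + dW q = wt e

/-- The base condition: `d_V(ū,v̄) = d_W(t̄,w̄) = 0` on the distinguished biedge. -/
def BidistBase (ebar : B.ℰ) (dV : ↥B.Pset → ℚ) (dW : ↥B.Qset → ℚ) : Prop :=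
  (∀ p : ↥B.Pset, s((p : B.V × B.V).1, (p : B.V × B.V).2) = B.τG ebar → dV p = 0) ∧
  (∀ q : ↥B.Qset, s((q : B.W × B.W).1, (q : B.W × B.W).2) = B.τH ebar → dW q = 0)

/-- On every closed walk in `G`, the minimum of `d_V` over the consecutive vertex pairs is
attained at least twice. -/
def BidistMinG (dV : ↥B.Pset → ℚ) : Prop :=
  ∀ (n : ℕ) (u : ℕ → B.V) (w : Fin n → ↥B.Pset),
    (∀ i : Fin n, (w i : B.V × B.V) = (u i.1, u (i.1 + 1))) → u n = u 0 →
    ∀ i : Fin n, (∀ k, dV (w i) ≤ dV (w k)) → ∃ j, j ≠ i ∧ dV (w j) = dV (w i)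

/-- On every closed walk in `H`, the minimum of `d_W` over the consecutive vertex pairs is
attained at least twice. -/
def BidistMinH (dW : ↥B.Qset → ℚ) : Prop :=
  ∀ (n : ℕ) (u : ℕ → B.W) (w : Fin n → ↥B.Qset),
    (∀ i : Fin n, (w i : B.W × B.W) = (u i.1, u (i.1 + 1))) → u n = u 0 →
    ∀ i : Fin n, (∀ k, dW (w i) ≤ dW (w k)) → ∃ j, j ≠ i ∧ dW (w j) = dW (w i)

/-- A bidistance on `B` compatible with the weight vector `wt`. -/
def IsBidistance (ebar : B.ℰ) (wt : {e : B.ℰ // e ≠ ebar} → ℚ)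
    (dV : ↥B.Pset → ℚ) (dW : ↥B.Qset → ℚ) : Prop :=
  B.BidistSymmG dV ∧ B.BidistSymmH dW ∧ B.BidistSum ebar wt dV dW ∧
  B.BidistBase ebar dV dW ∧ B.BidistMinG dV ∧ B.BidistMinH dW

/-! ### The quotient bigraph `B_d` -/

/-- The value of `d_V` on (the endpoint pair of) a biedge. -/
def gvalG (dV : ↥B.Pset → ℚ) (e : B.ℰ) : ℚ :=
  if h : ∃ p : ↥B.Pset, s((p : B.V × B.V).1, (p : B.V × B.V).2) = B.τG e then dV h.choose
  else 0

/-- The value of `d_W` on (the endpoint pair of) a biedge. -/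
def gvalH (dW : ↥B.Qset → ℚ) (e : B.ℰ) : ℚ :=
  if h : ∃ q : ↥B.Qset, s((q : B.W × B.W).1, (q : B.W × B.W).2) = B.τH e then dW h.choose
  else 0

/-- Incidences of the graph `G`: pairs of a biedge and one of its endpoints. -/
def IncG := {q : B.ℰ × B.V // q.2 ∈ B.τG q.1}

/-- Incidences of the graph `H`. -/
def IncH := {q : B.ℰ × B.W // q.2 ∈ B.τH q.1}

instance : Finite B.IncG := by unfold IncG; infer_instance
instance : Finite B.IncH := by unfold IncH; infer_instance

/-- Two incidences `(e,v)`, `(e',v')` of `G` are identified in `B_d` if the `d_V`-levels of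
`e` and `e'` agree (say equal to `α`) and `v`, `v'` are connected by edges of level `> α`. -/
def relIncG (dV : ↥B.Pset → ℚ) : B.IncG → B.IncG → Prop := fun a b =>
  B.gvalG dV a.1.1 = B.gvalG dV b.1.1 ∧
  Relation.EqvGen (fun u v => ∃ e, B.gvalG dV a.1.1 < B.gvalG dV e ∧ B.τG e = s(u, v))
    a.1.2 b.1.2

def relIncH (dW : ↥B.Qset → ℚ) : B.IncH → B.IncH → Prop := fun a b =>
  B.gvalH dW a.1.1 = B.gvalH dW b.1.1 ∧
  Relation.EqvGen (fun u v => ∃ e, B.gvalH dW a.1.1 < B.gvalH dW e ∧ B.τH e = s(u, v))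
    a.1.2 b.1.2

def incSetoidG (dV : ↥B.Pset → ℚ) : Setoid B.IncG :=
  ⟨Relation.EqvGen (B.relIncG dV), Relation.EqvGen.is_equivalence _⟩

def incSetoidH (dW : ↥B.Qset → ℚ) : Setoid B.IncH :=
  ⟨Relation.EqvGen (B.relIncH dW), Relation.EqvGen.is_equivalence _⟩

/-- The vertices of the first graph `G_{d_V}` of the quotient bigraph `B_d`:
classes of incidences.  This realizes the disjoint union of the contractions
`G_{≥α} / G_{>α}` (with isolated vertices discarded). -/
def QVertG (dV : ↥B.Pset → ℚ) := Quotient (B.incSetoidG dV)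

def QVertH (dW : ↥B.Qset → ℚ) := Quotient (B.incSetoidH dW)

/-- The incidence map of `G_{d_V}`. -/
def quotEndsG (dV : ↥B.Pset → ℚ) : B.ℰ → Sym2 (B.QVertG dV) := fun e =>
  s(Quotient.mk (B.incSetoidG dV) ⟨(e, B.eFstG e), B.eFstG_mem e⟩,
    Quotient.mk (B.incSetoidG dV) ⟨(e, B.eSndG e), B.eSndG_mem e⟩)

/-- The incidence map of `H_{d_W}`. -/
def quotEndsH (dW : ↥B.Qset → ℚ) : B.ℰ → Sym2 (B.QVertH dW) := fun e =>
  s(Quotient.mk (B.incSetoidH dW) ⟨(e, B.eFstH e), B.eFstH_mem e⟩,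
    Quotient.mk (B.incSetoidH dW) ⟨(e, B.eSndH e), B.eSndH_mem e⟩)

/-- The quotient bigraph `B_d = (G_{d_V}, H_{d_W})` of a bigraph by a bidistance `(d_V, d_W)`,
with arbitrarily fixed total orders on the new vertex sets.  It has the same biedges as `B`. -/
def quotBigraph (dV : ↥B.Pset → ℚ) (dW : ↥B.Qset → ℚ)
    (oV : LinearOrder (B.QVertG dV)) (oW : LinearOrder (B.QVertH dW)) : Bigraph where
  ℰ := B.ℰ
  V := B.QVertG dV
  W := B.QVertH dW
  finE := B.finE
  finV := Quotient.finite _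
  finW := Quotient.finite _
  τG := B.quotEndsG dV
  τH := B.quotEndsH dW
  ordV := oV
  ordW := oW

/-! ### Untangling -/

/-- `B` untangles via the biedge `ebar` with respect to the decomposition
`ℰ = E1 ⊔ E2 ⊔ {ebar}`, `V = V1 ⊔ V2`, `W = W1 ⊔ W2`:  the graph `G` is the disjoint union
of the subgraph on `V1` with edges `E1 ∪ {ebar}` and the subgraph on `V2` with edges `E2`,
while `H` is the disjoint union of the subgraph on `W1` with edges `E1` and the subgraph on
`W2` with edges `E2 ∪ {ebar}`.  The two bigraphs into which `B` untangles are then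
`B₁ = B.restrict E1` and `B₂ = B.restrict E2`. -/
def Untangles (ebar : B.ℰ) (E1 E2 : Set B.ℰ) (V1 V2 : Set B.V) (W1 W2 : Set B.W) : Prop :=
  ebar ∉ E1 ∧ ebar ∉ E2 ∧ E1 ∩ E2 = ∅ ∧ (∀ e : B.ℰ, e = ebar ∨ e ∈ E1 ∨ e ∈ E2) ∧
  V1 ∩ V2 = ∅ ∧ V1 ∪ V2 = Set.univ ∧
  (∀ e ∈ E1, ∀ v, v ∈ B.τG e → v ∈ V1) ∧ (∀ v, v ∈ B.τG ebar → v ∈ V1) ∧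
  (∀ e ∈ E2, ∀ v, v ∈ B.τG e → v ∈ V2) ∧
  W1 ∩ W2 = ∅ ∧ W1 ∪ W2 = Set.univ ∧
  (∀ e ∈ E1, ∀ x, x ∈ B.τH e → x ∈ W1) ∧
  (∀ e ∈ E2, ∀ x, x ∈ B.τH e → x ∈ W2) ∧ (∀ x, x ∈ B.τH ebar → x ∈ W2)

/-! ### The rational map `f_B` -/

/-- The vector of coordinates of the rational map `f_B`, evaluated on representatives
`x : V → ℂ` and `y : W → ℂ`:  the `e`-th coordinate is `(x_u - x_v)(y_t - y_w)` where
`{u,v} = τ_G(e)` with `u ≺ v` and `{t,w} = τ_H(e)` with `t ≺ w`.  (For a self-loop the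
corresponding factor is `0`.) -/
def fVec (x : B.V → ℂ) (y : B.W → ℂ) : B.ℰ → ℂ :=
  fun e => (x (B.eFstG e) - x (B.eSndG e)) * (y (B.eFstH e) - y (B.eSndH e))

/-- The subspace `L_G` of vectors that are constant on each connected component of `G`. -/
def LG : Submodule ℂ (B.V → ℂ) where
  carrier := {x | ∀ u v : B.V, Relation.EqvGen (adjRel B.τG) u v → x u = x v}
  add_mem' := by
    intro a b ha hb u v h
    simp only [Pi.add_apply, ha u v h, hb u v h]
  zero_mem' := by intro u v _; rfl
  smul_mem' := by
    intro c a ha u v h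
    simp only [Pi.smul_apply, ha u v h]

/-- The subspace `L_H` of vectors that are constant on each connected component of `H`. -/
def LH : Submodule ℂ (B.W → ℂ) where
  carrier := {y | ∀ u v : B.W, Relation.EqvGen (adjRel B.τH) u v → y u = y v}
  add_mem' := by
    intro a b ha hb u v h
    simp only [Pi.add_apply, ha u v h, hb u v h]
  zero_mem' := by intro u v _; rfl
  smul_mem' := by
    intro c a ha u v h
    simp only [Pi.smul_apply, ha u v h]

/-- Dominance of the rational map `f_B`:  the image of `f_B` is not contained in any
proper algebraic subset of `ℙ(ℂ^ℰ)`, equivalently in no zero set of a nonzero homogeneous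
polynomial. -/
def FDominant : Prop :=
  ¬ ∃ (n : ℕ) (P : MvPolynomial B.ℰ ℂ), P ≠ 0 ∧ P.IsHomogeneous n ∧
      ∀ (x : B.V → ℂ) (y : B.W → ℂ), MvPolynomial.eval (B.fVec x y) P = 0

end Bigraph


section CCHelpers

variable {V : Type}

/-- The setoid generated by a relation. -/
def egSetoid (r : V → V → Prop) : Setoid V :=
  ⟨Relation.EqvGen r, Relation.EqvGen.is_equivalence _⟩

/-- Number of classes of the equivalence generated by `r`. -/
def ncc (r : V → V → Prop) : ℕ := Nat.card (Quotient (egSetoid r))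

theorem eqvGen_mono' {r r' : V → V → Prop}
    (h : ∀ u v, r u v → Relation.EqvGen r' u v) :
    ∀ {u v}, Relation.EqvGen r u v → Relation.EqvGen r' u v := by
  intro u v huv
  induction huv with
  | rel a b hab => exact h a b hab
  | refl a => exact Relation.EqvGen.refl a
  | symm a b _ ih => exact Relation.EqvGen.symm _ _ ih
  | trans a b c _ _ ih1 ih2 => exact Relation.EqvGen.trans _ _ _ ih1 ih2

theorem ncc_congr {r r' : V → V → Prop}
    (h1 : ∀ u v, r u v → Relation.EqvGen r' u v)
    (h2 : ∀ u v, r' u v → Relation.EqvGen r u v) : ncc r = ncc r' :=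
  Nat.card_congr (Quotient.congrRight fun a b =>
    ⟨fun h => eqvGen_mono' h1 h, fun h => eqvGen_mono' h2 h⟩)

theorem ncc_le_of_le [Finite V] {r r' : V → V → Prop}
    (h : ∀ u v, r u v → Relation.EqvGen r' u v) : ncc r' ≤ ncc r :=
  Nat.card_le_card_of_surjective
    (Quotient.map' (fun v => v) (fun _ _ hab => eqvGen_mono' h hab))
    (fun x => Quotient.inductionOn' x fun v => ⟨Quotient.mk'' v, rfl⟩)

theorem ncc_le_card [Finite V] (r : V → V → Prop) : ncc r ≤ Nat.card V :=
  Nat.card_le_card_of_surjective (Quotient.mk (egSetoid r))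
    (fun x => Quotient.inductionOn x fun v => ⟨v, rfl⟩)

theorem ncc_addPair [Finite V] {r : V → V → Prop} (a b : V) :
    ncc r ≤ ncc (fun u v => r u v ∨ (u = a ∧ v = b)) + 1 := by
  classical
  set t : V → V → Prop := fun u v => r u v ∨ (u = a ∧ v = b) with ht
  have hbreak : ∀ u v, Relation.EqvGen t u v →
      Relation.EqvGen r u v ∨ (Relation.EqvGen r u a ∧ Relation.EqvGen r b v) ∨
      (Relation.EqvGen r u b ∧ Relation.EqvGen r a v) := by
    intro u v h
    induction h with
    | rel x y hxy =>
      rcases hxy with h | ⟨rfl, rfl⟩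
      · exact Or.inl (Relation.EqvGen.rel _ _ h)
      · exact Or.inr (Or.inl ⟨Relation.EqvGen.refl _, Relation.EqvGen.refl _⟩)
    | refl x => exact Or.inl (Relation.EqvGen.refl x)
    | symm x y _ ih =>
      rcases ih with h | ⟨h1, h2⟩ | ⟨h1, h2⟩
      · exact Or.inl (Relation.EqvGen.symm _ _ h)
      · exact Or.inr (Or.inr ⟨Relation.EqvGen.symm _ _ h2, Relation.EqvGen.symm _ _ h1⟩)
      · exact Or.inr (Or.inl ⟨Relation.EqvGen.symm _ _ h2, Relation.EqvGen.symm _ _ h1⟩)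
    | trans x y z _ _ ih1 ih2 =>
      rcases ih1 with h1 | ⟨h1, h1'⟩ | ⟨h1, h1'⟩ <;>
        rcases ih2 with h2 | ⟨h2, h2'⟩ | ⟨h2, h2'⟩
      · exact Or.inl (Relation.EqvGen.trans _ _ _ h1 h2)
      · exact Or.inr (Or.inl ⟨Relation.EqvGen.trans _ _ _ h1 h2, h2'⟩)
      · exact Or.inr (Or.inr ⟨Relation.EqvGen.trans _ _ _ h1 h2, h2'⟩)
      · exact Or.inr (Or.inl ⟨h1, Relation.EqvGen.trans _ _ _ h1' h2⟩)
      · exact Or.inr (Or.inl ⟨h1, h2'⟩)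
      · exact Or.inl (Relation.EqvGen.trans _ _ _ h1 h2')
      · exact Or.inr (Or.inr ⟨h1, Relation.EqvGen.trans _ _ _ h1' h2⟩)
      · exact Or.inl (Relation.EqvGen.trans _ _ _ h1 h2')
      · exact Or.inr (Or.inr ⟨h1, h2'⟩)
  have monor : ∀ u v, Relation.EqvGen r u v → Relation.EqvGen t u v :=
    fun u v h => eqvGen_mono' (fun x y hxy => Relation.EqvGen.rel x y (Or.inl hxy)) h
  have hresp : ∀ u v : V, Relation.EqvGen r u v →
      (if Relation.EqvGen r u b then (Sum.inr () : Quotient (egSetoid t) ⊕ Unit)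
        else Sum.inl (Quotient.mk (egSetoid t) u)) =
      (if Relation.EqvGen r v b then (Sum.inr () : Quotient (egSetoid t) ⊕ Unit)
        else Sum.inl (Quotient.mk (egSetoid t) v)) := by
    intro u v h
    by_cases hu : Relation.EqvGen r u b
    · rw [if_pos hu, if_pos (Relation.EqvGen.trans _ _ _ (Relation.EqvGen.symm _ _ h) hu)]
    · have hv : ¬ Relation.EqvGen r v b := fun hv =>
        hu (Relation.EqvGen.trans _ _ _ h hv)
      rw [if_neg hu, if_neg hv]
      exact congrArg _ (Quotient.sound (monor u v h))
  let F : Quotient (egSetoid r) → Quotient (egSetoid t) ⊕ Unit :=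
    Quotient.lift _ hresp
  have hinj : Function.Injective F := by
    intro x y hxy
    obtain ⟨u, rfl⟩ := Quotient.exists_rep x
    obtain ⟨v, rfl⟩ := Quotient.exists_rep y
    have hFu : F (Quotient.mk _ u) =
        (if Relation.EqvGen r u b then (Sum.inr () : Quotient (egSetoid t) ⊕ Unit)
          else Sum.inl (Quotient.mk (egSetoid t) u)) := rfl
    have hFv : F (Quotient.mk _ v) =
        (if Relation.EqvGen r v b then (Sum.inr () : Quotient (egSetoid t) ⊕ Unit)
          else Sum.inl (Quotient.mk (egSetoid t) v)) := rfl
    rw [hFu, hFv] at hxy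
    by_cases hu : Relation.EqvGen r u b <;> by_cases hv : Relation.EqvGen r v b
    · exact Quotient.sound (Relation.EqvGen.trans _ _ _ hu (Relation.EqvGen.symm _ _ hv))
    · rw [if_pos hu, if_neg hv] at hxy; exact absurd hxy (by simp)
    · rw [if_neg hu, if_pos hv] at hxy; exact absurd hxy (by simp)
    · rw [if_neg hu, if_neg hv] at hxy
      have := Quotient.exact (Sum.inl.inj hxy)
      rcases hbreak u v this with h | ⟨h1, h2⟩ | ⟨h1, h2⟩
      · exact Quotient.sound h
      · exact absurd (Relation.EqvGen.symm _ _ h2) hv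
      · exact absurd h1 hu
  calc ncc r ≤ Nat.card (Quotient (egSetoid t) ⊕ Unit) :=
        Nat.card_le_card_of_injective F hinj
    _ = ncc t + 1 := by simp [Nat.card_sum, ncc]

theorem ncc_split [Finite V] {r s : V → V → Prop} {V1 V2 : Set V}
    (hr : ∀ u v, r u v → u ∈ V1 ∧ v ∈ V1)
    (hs : ∀ u v, s u v → u ∈ V2 ∧ v ∈ V2)
    (hdisj : ∀ v, ¬(v ∈ V1 ∧ v ∈ V2))
    (hcov : ∀ v, v ∈ V1 ∨ v ∈ V2) :
    ncc (fun u v => r u v ∨ s u v) + Nat.card V = ncc r + ncc s := by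
  classical
  set t : V → V → Prop := fun u v => r u v ∨ s u v with ht
  have monor : ∀ u v, Relation.EqvGen r u v → Relation.EqvGen t u v :=
    fun u v h => eqvGen_mono' (fun x y hxy => Relation.EqvGen.rel x y (Or.inl hxy)) h
  have monos : ∀ u v, Relation.EqvGen s u v → Relation.EqvGen t u v :=
    fun u v h => eqvGen_mono' (fun x y hxy => Relation.EqvGen.rel x y (Or.inr hxy)) h
  have sider : ∀ u v, Relation.EqvGen r u v → u = v ∨ (u ∈ V1 ∧ v ∈ V1) := by
    intro u v h
    induction h with
    | rel x y hxy => exact Or.inr (hr x y hxy)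
    | refl x => exact Or.inl rfl
    | symm x y _ ih =>
      rcases ih with h | h
      · exact Or.inl h.symm
      · exact Or.inr ⟨h.2, h.1⟩
    | trans x y z _ _ ih1 ih2 =>
      rcases ih1 with h1 | h1 <;> rcases ih2 with h2 | h2
      · exact Or.inl (h1.trans h2)
      · exact Or.inr (h1 ▸ h2)
      · exact Or.inr ⟨h1.1, h2 ▸ h1.2⟩
      · exact Or.inr ⟨h1.1, h2.2⟩
  have sides : ∀ u v, Relation.EqvGen s u v → u = v ∨ (u ∈ V2 ∧ v ∈ V2) := by
    intro u v h
    induction h with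
    | rel x y hxy => exact Or.inr (hs x y hxy)
    | refl x => exact Or.inl rfl
    | symm x y _ ih =>
      rcases ih with h | h
      · exact Or.inl h.symm
      · exact Or.inr ⟨h.2, h.1⟩
    | trans x y z _ _ ih1 ih2 =>
      rcases ih1 with h1 | h1 <;> rcases ih2 with h2 | h2
      · exact Or.inl (h1.trans h2)
      · exact Or.inr (h1 ▸ h2)
      · exact Or.inr ⟨h1.1, h2 ▸ h1.2⟩
      · exact Or.inr ⟨h1.1, h2.2⟩
  have hsplit : ∀ u v, Relation.EqvGen t u v →
      Relation.EqvGen r u v ∨ Relation.EqvGen s u v := by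
    intro u v h
    induction h with
    | rel x y hxy =>
      rcases hxy with h | h
      · exact Or.inl (Relation.EqvGen.rel _ _ h)
      · exact Or.inr (Relation.EqvGen.rel _ _ h)
    | refl x => exact Or.inl (Relation.EqvGen.refl x)
    | symm x y _ ih =>
      rcases ih with h | h
      · exact Or.inl (Relation.EqvGen.symm _ _ h)
      · exact Or.inr (Relation.EqvGen.symm _ _ h)
    | trans x y z _ _ ih1 ih2 =>
      rcases ih1 with h1 | h1 <;> rcases ih2 with h2 | h2
      · exact Or.inl (Relation.EqvGen.trans _ _ _ h1 h2)
      · rcases sider x y h1 with rfl | hm1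
        · exact Or.inr h2
        · rcases sides y z h2 with rfl | hm2
          · exact Or.inl h1
          · exact absurd ⟨hm1.2, hm2.1⟩ (hdisj y)
      · rcases sides x y h1 with rfl | hm1
        · exact Or.inl h2
        · rcases sider y z h2 with rfl | hm2
          · exact Or.inr h1
          · exact absurd ⟨hm2.1, hm1.2⟩ (hdisj y)
      · exact Or.inr (Relation.EqvGen.trans _ _ _ h1 h2)
  let g1 : V → Quotient (egSetoid t) ⊕ V := fun v =>
    if v ∈ V1 then Sum.inl (Quotient.mk (egSetoid t) v) else Sum.inr v
  let g2 : V → Quotient (egSetoid t) ⊕ V := fun v =>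
    if v ∈ V2 then Sum.inl (Quotient.mk (egSetoid t) v) else Sum.inr v
  have hg1 : ∀ u v : V, Relation.EqvGen r u v → g1 u = g1 v := by
    intro u v h
    rcases sider u v h with rfl | ⟨h1, h2⟩
    · rfl
    · show (if u ∈ V1 then _ else _) = (if v ∈ V1 then _ else _)
      rw [if_pos h1, if_pos h2]
      exact congrArg _ (Quotient.sound (monor u v h))
  have hg2 : ∀ u v : V, Relation.EqvGen s u v → g2 u = g2 v := by
    intro u v h
    rcases sides u v h with rfl | ⟨h1, h2⟩
    · rfl
    · show (if u ∈ V2 then _ else _) = (if v ∈ V2 then _ else _)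
      rw [if_pos h1, if_pos h2]
      exact congrArg _ (Quotient.sound (monos u v h))
  let F : Quotient (egSetoid r) ⊕ Quotient (egSetoid s) → Quotient (egSetoid t) ⊕ V :=
    Sum.elim (Quotient.lift g1 hg1) (Quotient.lift g2 hg2)
  have hnotV2 : ∀ v : V, v ∈ V1 → v ∉ V2 := fun v h1 h2 => hdisj v ⟨h1, h2⟩
  have hcross : ∀ u v : V, u ∈ V1 → v ∈ V2 → ¬ Relation.EqvGen t u v := by
    intro u v hu hv h
    rcases hsplit u v h with h | h
    · rcases sider u v h with rfl | hm
      · exact hdisj u ⟨hu, hv⟩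
      · exact hdisj v ⟨hm.2, hv⟩
    · rcases sides u v h with rfl | hm
      · exact hdisj u ⟨hu, hv⟩
      · exact hdisj u ⟨hu, hm.1⟩
  have key1 : ∀ u v : V, g1 u = g1 v → Relation.EqvGen r u v := by
    intro u v h
    simp only [g1] at h
    by_cases hu : u ∈ V1 <;> by_cases hv : v ∈ V1
    · rw [if_pos hu, if_pos hv] at h
      rcases hsplit u v (Quotient.exact (Sum.inl.inj h)) with h' | h'
      · exact h'
      · rcases sides u v h' with rfl | hm
        · exact Relation.EqvGen.refl u
        · exact absurd ⟨hu, hm.1⟩ (hdisj u)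
    · rw [if_pos hu, if_neg hv] at h; exact absurd h (by simp)
    · rw [if_neg hu, if_pos hv] at h; exact absurd h (by simp)
    · rw [if_neg hu, if_neg hv] at h
      rw [Sum.inr.inj h]
      exact Relation.EqvGen.refl v
  have key2 : ∀ u v : V, g2 u = g2 v → Relation.EqvGen s u v := by
    intro u v h
    simp only [g2] at h
    by_cases hu : u ∈ V2 <;> by_cases hv : v ∈ V2
    · rw [if_pos hu, if_pos hv] at h
      rcases hsplit u v (Quotient.exact (Sum.inl.inj h)) with h' | h'
      · rcases sider u v h' with rfl | hm
        · exact Relation.EqvGen.refl u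
        · exact absurd ⟨hm.1, hu⟩ (hdisj u)
      · exact h'
    · rw [if_pos hu, if_neg hv] at h; exact absurd h (by simp)
    · rw [if_neg hu, if_pos hv] at h; exact absurd h (by simp)
    · rw [if_neg hu, if_neg hv] at h
      rw [Sum.inr.inj h]
      exact Relation.EqvGen.refl v
  have key12 : ∀ u v : V, g1 u = g2 v → False := by
    intro u v h
    simp only [g1, g2] at h
    by_cases hu : u ∈ V1 <;> by_cases hv : v ∈ V2
    · rw [if_pos hu, if_pos hv] at h
      exact hcross u v hu hv (Quotient.exact (Sum.inl.inj h))
    · rw [if_pos hu, if_neg hv] at h; exact absurd h (by simp)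
    · rw [if_neg hu, if_pos hv] at h; exact absurd h (by simp)
    · rw [if_neg hu, if_neg hv] at h
      obtain rfl := Sum.inr.inj h
      rcases hcov u with h1 | h1
      · exact hu h1
      · exact hv h1
  have hinj : Function.Injective F := by
    intro x y hxy
    rcases x with x | x <;> rcases y with y | y
    · obtain ⟨u, rfl⟩ := Quotient.exists_rep x
      obtain ⟨v, rfl⟩ := Quotient.exists_rep y
      exact congrArg Sum.inl (Quotient.sound (key1 u v hxy))
    · obtain ⟨u, rfl⟩ := Quotient.exists_rep x
      obtain ⟨v, rfl⟩ := Quotient.exists_rep y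
      exact (key12 u v hxy).elim
    · obtain ⟨u, rfl⟩ := Quotient.exists_rep x
      obtain ⟨v, rfl⟩ := Quotient.exists_rep y
      exact (key12 v u hxy.symm).elim
    · obtain ⟨u, rfl⟩ := Quotient.exists_rep x
      obtain ⟨v, rfl⟩ := Quotient.exists_rep y
      exact congrArg Sum.inr (Quotient.sound (key2 u v hxy))
  have hsurj : Function.Surjective F := by
    intro x
    rcases x with c | v
    · obtain ⟨v, rfl⟩ := Quotient.exists_rep c
      rcases hcov v with h | h
      · exact ⟨Sum.inl (Quotient.mk _ v), if_pos h⟩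
      · exact ⟨Sum.inr (Quotient.mk _ v), if_pos h⟩
    · rcases hcov v with h | h
      · exact ⟨Sum.inr (Quotient.mk _ v), if_neg (hnotV2 v h)⟩
      · exact ⟨Sum.inl (Quotient.mk _ v), if_neg (fun h' => hdisj v ⟨h', h⟩)⟩
  have hcard := Nat.card_congr (Equiv.ofBijective F ⟨hinj, hsurj⟩)
  rw [Nat.card_sum, Nat.card_sum] at hcard
  show ncc t + Nat.card V = ncc r + ncc s
  unfold ncc
  omega

end CCHelpers

theorem sMinMax {V : Type} [LinearOrder V] (z : Sym2 V) : s(sMin z, sMax z) = z := by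
  induction z using Sym2.ind with
  | _ x y =>
    rcases le_total x y with h | h
    · simp [sMin, sMax, min_eq_left h, max_eq_right h]
    · simp [sMin, sMax, min_eq_right h, max_eq_left h, Sym2.eq_swap]


/-- The relation on vertices given by the edges in `S`. -/
def edgeRel {E V : Type} (τ : E → Sym2 V) (S : Set E) : V → V → Prop :=
  fun u v => ∃ e ∈ S, τ e = s(u, v)

theorem numCC_restrict {E V : Type} (τ : E → Sym2 V) (S : Set E) :
    numCC (fun e : {e : E // e ∈ S} => τ e.1) = ncc (edgeRel τ S) := by
  refine ncc_congr ?_ ?_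
  · rintro u v ⟨e, he⟩
    exact Relation.EqvGen.rel _ _ ⟨e.1, e.2, he⟩
  · rintro u v ⟨e, heS, he⟩
    exact Relation.EqvGen.rel _ _ ⟨⟨e, heS⟩, he⟩

/-- If a pseudo-Laman bigraph `B` untangles via `ē` into `B₁` and `B₂`
and `ē` is a bridge in `G`, then `B₁` or `B₂` is not pseudo-Laman. -/
theorem statement12 (B : Bigraph) (hloop : ¬ B.HasLoop) (hpl : B.PseudoLaman)
    (ebar : B.ℰ) (E1 E2 : Set B.ℰ) (V1 V2 : Set B.V) (W1 W2 : Set B.W)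
    (hun : B.Untangles ebar E1 E2 V1 V2 W1 W2)
    (hbG : IsBridge B.τG ebar) :
    ¬ (B.restrict E1).PseudoLaman ∨ ¬ (B.restrict E2).PseudoLaman := by
  classical
  by_contra hcon
  push_neg at hcon
  obtain ⟨hB1, hB2⟩ := hcon
  obtain ⟨he1, he2, hE12, hcovE, hV12, hVu, hGE1, hGebar, hGE2, hW12, hWu, hHE1, hHE2,
    hHebar⟩ := hun
  have hVdisj : ∀ v : B.V, ¬ (v ∈ V1 ∧ v ∈ V2) := fun v hv =>
    Set.eq_empty_iff_forall_notMem.mp hV12 v ⟨hv.1, hv.2⟩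
  have hVcov : ∀ v : B.V, v ∈ V1 ∨ v ∈ V2 := fun v =>
    (Set.mem_union v V1 V2).mp (hVu ▸ Set.mem_univ v)
  have hWdisj : ∀ w : B.W, ¬ (w ∈ W1 ∧ w ∈ W2) := fun w hw =>
    Set.eq_empty_iff_forall_notMem.mp hW12 w ⟨hw.1, hw.2⟩
  have hWcov : ∀ w : B.W, w ∈ W1 ∨ w ∈ W2 := fun w =>
    (Set.mem_union w W1 W2).mp (hWu ▸ Set.mem_univ w)
  have memL : ∀ {α : Type} (z : Sym2 α) (u v : α), z = s(u, v) → u ∈ z ∧ v ∈ z := by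
    intro α z u v h
    rw [h]
    exact ⟨Sym2.mem_mk_left u v, Sym2.mem_mk_right u v⟩
  -- supports of the edge relations
  have hrGsup : ∀ u v, edgeRel B.τG (E1 ∪ {ebar}) u v → u ∈ V1 ∧ v ∈ V1 := by
    rintro u v ⟨e, heS, he⟩
    rcases heS with heS | heS
    · exact ⟨hGE1 e heS u (memL _ u v he).1, hGE1 e heS v (memL _ u v he).2⟩
    · rw [Set.mem_singleton_iff] at heS
      subst heS
      exact ⟨hGebar u (memL _ u v he).1, hGebar v (memL _ u v he).2⟩
  have hrGsup1 : ∀ u v, edgeRel B.τG E1 u v → u ∈ V1 ∧ v ∈ V1 := by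
    rintro u v ⟨e, heS, he⟩
    exact ⟨hGE1 e heS u (memL _ u v he).1, hGE1 e heS v (memL _ u v he).2⟩
  have hrGsup2 : ∀ u v, edgeRel B.τG E2 u v → u ∈ V2 ∧ v ∈ V2 := by
    rintro u v ⟨e, heS, he⟩
    exact ⟨hGE2 e heS u (memL _ u v he).1, hGE2 e heS v (memL _ u v he).2⟩
  have hrHsup1 : ∀ u v, edgeRel B.τH E1 u v → u ∈ W1 ∧ v ∈ W1 := by
    rintro u v ⟨e, heS, he⟩
    exact ⟨hHE1 e heS u (memL _ u v he).1, hHE1 e heS v (memL _ u v he).2⟩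
  have hrHsup2 : ∀ u v, edgeRel B.τH (E2 ∪ {ebar}) u v → u ∈ W2 ∧ v ∈ W2 := by
    rintro u v ⟨e, heS, he⟩
    rcases heS with heS | heS
    · exact ⟨hHE2 e heS u (memL _ u v he).1, hHE2 e heS v (memL _ u v he).2⟩
    · rw [Set.mem_singleton_iff] at heS
      subst heS
      exact ⟨hHebar u (memL _ u v he).1, hHebar v (memL _ u v he).2⟩
  -- splitting identities
  have F1' := ncc_split hrGsup hrGsup2 hVdisj hVcov
  have F2' := ncc_split hrGsup1 hrGsup2 hVdisj hVcov
  have F5' := ncc_split hrHsup1 hrHsup2 hWdisj hWcov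
  -- identification of the various relations
  have cu : ncc (fun u v => edgeRel B.τG (E1 ∪ {ebar}) u v ∨ edgeRel B.τG E2 u v)
      = ncc (adjRel B.τG) := by
    refine ncc_congr ?_ ?_
    · intro u v h
      rcases h with ⟨e, _, he⟩ | ⟨e, _, he⟩ <;> exact Relation.EqvGen.rel _ _ ⟨e, he⟩
    · rintro u v ⟨e, he⟩
      rcases hcovE e with rfl | heS | heS
      · exact Relation.EqvGen.rel _ _
          (Or.inl ⟨e, Set.mem_union_right _ (Set.mem_singleton _), he⟩)
      · exact Relation.EqvGen.rel _ _ (Or.inl ⟨e, Set.mem_union_left _ heS, he⟩)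
      · exact Relation.EqvGen.rel _ _ (Or.inr ⟨e, heS, he⟩)
  have c2 : ncc (fun u v => edgeRel B.τG E1 u v ∨ edgeRel B.τG E2 u v)
      = ncc (edgeRel B.τG (E1 ∪ E2)) := by
    refine ncc_congr ?_ ?_
    · intro u v h
      rcases h with ⟨e, heS, he⟩ | ⟨e, heS, he⟩
      · exact Relation.EqvGen.rel _ _ ⟨e, Set.mem_union_left _ heS, he⟩
      · exact Relation.EqvGen.rel _ _ ⟨e, Set.mem_union_right _ heS, he⟩
    · rintro u v ⟨e, heS, he⟩
      rcases heS with heS | heS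
      · exact Relation.EqvGen.rel _ _ (Or.inl ⟨e, heS, he⟩)
      · exact Relation.EqvGen.rel _ _ (Or.inr ⟨e, heS, he⟩)
  have cuH : ncc (fun u v => edgeRel B.τH E1 u v ∨ edgeRel B.τH (E2 ∪ {ebar}) u v)
      = ncc (adjRel B.τH) := by
    refine ncc_congr ?_ ?_
    · intro u v h
      rcases h with ⟨e, _, he⟩ | ⟨e, _, he⟩ <;> exact Relation.EqvGen.rel _ _ ⟨e, he⟩
    · rintro u v ⟨e, he⟩
      rcases hcovE e with rfl | heS | heS
      · exact Relation.EqvGen.rel _ _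
          (Or.inr ⟨e, Set.mem_union_right _ (Set.mem_singleton _), he⟩)
      · exact Relation.EqvGen.rel _ _ (Or.inl ⟨e, heS, he⟩)
      · exact Relation.EqvGen.rel _ _ (Or.inr ⟨e, Set.mem_union_left _ heS, he⟩)
  have cdel : numCC (deleteEnds B.τG ({ebar} : Set B.ℰ)) = ncc (edgeRel B.τG (E1 ∪ E2)) := by
    refine ncc_congr ?_ ?_
    · rintro u v ⟨e, he⟩
      rcases hcovE e.1 with h | h | h
      · exact absurd h e.2
      · exact Relation.EqvGen.rel _ _ ⟨e.1, Set.mem_union_left _ h, he⟩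
      · exact Relation.EqvGen.rel _ _ ⟨e.1, Set.mem_union_right _ h, he⟩
    · rintro u v ⟨e, heS, he⟩
      have hne : e ∉ ({ebar} : Set B.ℰ) := by
        intro hc
        rw [Set.mem_singleton_iff] at hc
        subst hc
        rcases heS with h | h
        · exact he1 h
        · exact he2 h
      exact Relation.EqvGen.rel _ _ ⟨⟨e, hne⟩, he⟩
  -- endpoints of ebar
  have hGb : B.τG ebar = s(B.eFstG ebar, B.eSndG ebar) := by
    letI := B.ordV
    exact (sMinMax (B.τG ebar)).symm
  have hHb : B.τH ebar = s(B.eFstH ebar, B.eSndH ebar) := by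
    letI := B.ordW
    exact (sMinMax (B.τH ebar)).symm
  -- adding back the bridge changes the count by at most one (G side)
  have F4 : ncc (edgeRel B.τG (E1 ∪ E2)) ≤ ncc (adjRel B.τG) + 1 := by
    have h := ncc_addPair (r := edgeRel B.τG (E1 ∪ E2)) (B.eFstG ebar) (B.eSndG ebar)
    have hc : ncc (fun u v => edgeRel B.τG (E1 ∪ E2) u v ∨
        (u = B.eFstG ebar ∧ v = B.eSndG ebar)) = ncc (adjRel B.τG) := by
      refine ncc_congr ?_ ?_
      · intro u v hh
        rcases hh with ⟨e, _, he⟩ | ⟨rfl, rfl⟩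
        · exact Relation.EqvGen.rel _ _ ⟨e, he⟩
        · exact Relation.EqvGen.rel _ _ ⟨ebar, hGb⟩
      · rintro u v ⟨e, he⟩
        rcases hcovE e with rfl | hh | hh
        · have h2 := hGb.symm.trans he
          rw [Sym2.eq_iff] at h2
          rcases h2 with ⟨h3, h4⟩ | ⟨h3, h4⟩
          · exact Relation.EqvGen.rel _ _ (Or.inr ⟨h3.symm, h4.symm⟩)
          · exact Relation.EqvGen.symm _ _
              (Relation.EqvGen.rel _ _ (Or.inr ⟨h3.symm, h4.symm⟩))
        · exact Relation.EqvGen.rel _ _ (Or.inl ⟨e, Set.mem_union_left _ hh, he⟩)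
        · exact Relation.EqvGen.rel _ _ (Or.inl ⟨e, Set.mem_union_right _ hh, he⟩)
    rw [hc] at h
    exact h
  -- monotonicity and one-step bounds (H side)
  have F6 : ncc (edgeRel B.τH (E2 ∪ {ebar})) ≤ ncc (edgeRel B.τH E2) := by
    refine ncc_le_of_le ?_
    rintro u v ⟨e, heS, he⟩
    exact Relation.EqvGen.rel _ _ ⟨e, Set.mem_union_left _ heS, he⟩
  have F7 : ncc (edgeRel B.τH E2) ≤ ncc (edgeRel B.τH (E2 ∪ {ebar})) + 1 := by
    have h := ncc_addPair (r := edgeRel B.τH E2) (B.eFstH ebar) (B.eSndH ebar)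
    have hc : ncc (fun u v => edgeRel B.τH E2 u v ∨
        (u = B.eFstH ebar ∧ v = B.eSndH ebar)) = ncc (edgeRel B.τH (E2 ∪ {ebar})) := by
      refine ncc_congr ?_ ?_
      · intro u v hh
        rcases hh with ⟨e, heS, he⟩ | ⟨rfl, rfl⟩
        · exact Relation.EqvGen.rel _ _ ⟨e, Set.mem_union_left _ heS, he⟩
        · exact Relation.EqvGen.rel _ _
            ⟨ebar, Set.mem_union_right _ (Set.mem_singleton _), hHb⟩
      · rintro u v ⟨e, heS, he⟩
        rcases heS with hh | hh
        · exact Relation.EqvGen.rel _ _ (Or.inl ⟨e, hh, he⟩)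
        · rw [Set.mem_singleton_iff] at hh
          subst hh
          have h2 := hHb.symm.trans he
          rw [Sym2.eq_iff] at h2
          rcases h2 with ⟨h3, h4⟩ | ⟨h3, h4⟩
          · exact Relation.EqvGen.rel _ _ (Or.inr ⟨h3.symm, h4.symm⟩)
          · exact Relation.EqvGen.symm _ _
              (Relation.EqvGen.rel _ _ (Or.inr ⟨h3.symm, h4.symm⟩))
    rw [hc] at h
    exact h
  -- assemble split identities in final form
  have F1 : ncc (adjRel B.τG) + Nat.card B.V
      = ncc (edgeRel B.τG (E1 ∪ {ebar})) + ncc (edgeRel B.τG E2) := by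
    rw [← cu]; exact F1'
  have F2 : ncc (edgeRel B.τG (E1 ∪ E2)) + Nat.card B.V
      = ncc (edgeRel B.τG E1) + ncc (edgeRel B.τG E2) := by
    rw [← c2]; exact F2'
  have F5 : ncc (adjRel B.τH) + Nat.card B.W
      = ncc (edgeRel B.τH E1) + ncc (edgeRel B.τH (E2 ∪ {ebar})) := by
    rw [← cuH]; exact F5'
  have F3 : ncc (adjRel B.τG) < ncc (edgeRel B.τG (E1 ∪ E2)) := by
    rw [← cdel]; exact hbG
  -- dimensions of the restricted bigraphs
  have cG1 : numCC (B.restrict E1).τG = ncc (edgeRel B.τG E1) := numCC_restrict B.τG E1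
  have cG2 : numCC (B.restrict E2).τG = ncc (edgeRel B.τG E2) := numCC_restrict B.τG E2
  have cH1 : numCC (B.restrict E1).τH = ncc (edgeRel B.τH E1) := numCC_restrict B.τH E1
  have cH2 : numCC (B.restrict E2).τH = ncc (edgeRel B.τH E2) := numCC_restrict B.τH E2
  have dG1 : (B.restrict E1).dimG = Nat.card B.V - ncc (edgeRel B.τG E1) := by
    show Nat.card B.V - numCC (B.restrict E1).τG = _
    rw [cG1]
  have dG2 : (B.restrict E2).dimG = Nat.card B.V - ncc (edgeRel B.τG E2) := by
    show Nat.card B.V - numCC (B.restrict E2).τG = _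
    rw [cG2]
  have dH1 : (B.restrict E1).dimH = Nat.card B.W - ncc (edgeRel B.τH E1) := by
    show Nat.card B.W - numCC (B.restrict E1).τH = _
    rw [cH1]
  have dH2 : (B.restrict E2).dimH = Nat.card B.W - ncc (edgeRel B.τH E2) := by
    show Nat.card B.W - numCC (B.restrict E2).τH = _
    rw [cH2]
  have HB1 : (Nat.card B.V - ncc (edgeRel B.τG E1))
      + (Nat.card B.W - ncc (edgeRel B.τH E1)) = Nat.card ↥E1 + 1 := by
    rw [← dG1, ← dH1]; exact hB1
  have HB2 : (Nat.card B.V - ncc (edgeRel B.τG E2))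
      + (Nat.card B.W - ncc (edgeRel B.τH E2)) = Nat.card ↥E2 + 1 := by
    rw [← dG2, ← dH2]; exact hB2
  have HPL : (Nat.card B.V - ncc (adjRel B.τG)) + (Nat.card B.W - ncc (adjRel B.τH))
      = Nat.card B.ℰ + 1 := hpl
  -- counting the edges
  have hdisjE : Disjoint E1 E2 := Set.disjoint_iff_inter_eq_empty.mpr hE12
  have hdisjE' : Disjoint (E1 ∪ E2) ({ebar} : Set B.ℰ) := by
    rw [Set.disjoint_singleton_right]
    rintro (h | h)
    · exact he1 h
    · exact he2 h
  have huniv : (Set.univ : Set B.ℰ) = (E1 ∪ E2) ∪ {ebar} := by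
    ext e
    simp only [Set.mem_univ, true_iff, Set.mem_union, Set.mem_singleton_iff]
    rcases hcovE e with h | h | h
    · exact Or.inr h
    · exact Or.inl (Or.inl h)
    · exact Or.inl (Or.inr h)
  have hcardE : Nat.card B.ℰ = Nat.card ↥E1 + Nat.card ↥E2 + 1 := by
    rw [Nat.card_coe_set_eq E1, Nat.card_coe_set_eq E2, ← Set.ncard_univ, huniv,
      Set.ncard_union_eq hdisjE' (Set.toFinite _) (Set.toFinite _),
      Set.ncard_union_eq hdisjE (Set.toFinite _) (Set.toFinite _), Set.ncard_singleton]
  -- bounds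
  have bG1 := ncc_le_card (edgeRel B.τG E1)
  have bG2 := ncc_le_card (edgeRel B.τG E2)
  have bGu := ncc_le_card (adjRel B.τG)
  have bG12 := ncc_le_card (edgeRel B.τG (E1 ∪ E2))
  have bG1' := ncc_le_card (edgeRel B.τG (E1 ∪ {ebar}))
  have bH1 := ncc_le_card (edgeRel B.τH E1)
  have bH2 := ncc_le_card (edgeRel B.τH E2)
  have bH2' := ncc_le_card (edgeRel B.τH (E2 ∪ {ebar}))
  have bHu := ncc_le_card (adjRel B.τH)
  omega

end LamanPaper
end
end

section
/- Let B=(G,H) be a pseudo-Laman bigraph without self-loops, let ē be a biedge of B, let wt∈ℚ^{ℰ∖{ē}}, and let d=(d_V,d_W) be a bidistance on B compatible with wt. Then the quotient bigraph B_d is also pseudo-Laman. -/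
set_option maxHeartbeats 1000000

noncomputable section
open Classical

namespace LamanPaper

variable {V E : Type}

namespace GQ



variable {V E : Type}

lemma eqvGen_lift {X : Type*} {Y : Sort*} {r : X → X → Prop} {f : X → Y}
    (h : ∀ a b, r a b → f a = f b) {a b : X} (hab : Relation.EqvGen r a b) : f a = f b := by
  induction hab with
  | rel a b h' => exact h a b h'
  | refl a => rfl
  | symm a b _ ih => exact ih.symm
  | trans a b c _ _ ih1 ih2 => exact ih1.trans ih2

lemma eqvGen_of_equivalence {X : Type*} {r : X → X → Prop} (h : Equivalence r) {a b : X}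
    (hab : Relation.EqvGen r a b) : r a b := by
  induction hab with
  | rel a b h' => exact h'
  | refl a => exact h.refl a
  | symm a b _ ih => exact h.symm ih
  | trans a b c _ _ ih1 ih2 => exact h.trans ih1 ih2

lemma card_split {X : Type} [Finite X] (P : X → Prop) :
    Nat.card X = Nat.card {x // P x} + Nat.card {x // ¬ P x} := by
  rw [← Nat.card_sum]
  exact Nat.card_congr (Equiv.sumCompl P).symm

lemma card_quot_le {X : Type} [Finite X] (s : Setoid X) :
    Nat.card (Quotient s) ≤ Nat.card X :=
  Nat.card_le_card_of_surjective (Quotient.mk s) (fun q => q.exists_rep)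

/-- adjacency through a subset of edges -/
def adjS (ends : E → Sym2 V) (S : Set E) : V → V → Prop := fun u v => ∃ e ∈ S, ends e = s(u, v)

def stS (ends : E → Sym2 V) (S : Set E) : Setoid V :=
  ⟨Relation.EqvGen (adjS ends S), Relation.EqvGen.is_equivalence _⟩

lemma stS_mk_eq_iff (ends : E → Sym2 V) (S : Set E) (u v : V) :
    Quotient.mk (stS ends S) u = Quotient.mk (stS ends S) v ↔ Relation.EqvGen (adjS ends S) u v :=
  ⟨fun h => Quotient.exact h, fun h => Quotient.sound h⟩

abbrev Inc (ends : E → Sym2 V) := {q : E × V // q.2 ∈ ends q.1}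

instance (ends : E → Sym2 V) [Finite E] [Finite V] : Finite (Inc ends) := by
  unfold Inc; infer_instance

def grel (ends : E → Sym2 V) (g : E → ℚ) : Inc ends → Inc ends → Prop := fun a b =>
  g a.1.1 = g b.1.1 ∧
    Relation.EqvGen (fun u v => ∃ e, g a.1.1 < g e ∧ ends e = s(u, v)) a.1.2 b.1.2

def gst (ends : E → Sym2 V) (g : E → ℚ) : Setoid (Inc ends) :=
  ⟨Relation.EqvGen (grel ends g), Relation.EqvGen.is_equivalence _⟩

abbrev QV (ends : E → Sym2 V) (g : E → ℚ) := Quotient (gst ends g)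

instance (ends : E → Sym2 V) (g : E → ℚ) [Finite E] [Finite V] : Finite (QV ends g) :=
  Quotient.finite _

def qEnds [LinearOrder V] (ends : E → Sym2 V) (g : E → ℚ) : E → Sym2 (QV ends g) := fun e =>
  s(Quotient.mk (gst ends g) ⟨(e, LamanPaper.sMin (ends e)), LamanPaper.sMin_mem _⟩,
    Quotient.mk (gst ends g) ⟨(e, LamanPaper.sMax (ends e)), LamanPaper.sMax_mem _⟩)

lemma grel_equivalence (ends : E → Sym2 V) (g : E → ℚ) : Equivalence (grel ends g) where
  refl a := ⟨rfl, Relation.EqvGen.refl _⟩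
  symm {a b} h := by
    refine ⟨h.1.symm, ?_⟩
    have := Relation.EqvGen.symm _ _ h.2
    rw [h.1] at this
    exact this
  trans {a b c} h1 h2 := by
    refine ⟨h1.1.trans h2.1, ?_⟩
    have := h2.2
    rw [← h1.1] at this
    exact Relation.EqvGen.trans _ _ _ h1.2 this

lemma qv_mk_eq_iff (ends : E → Sym2 V) (g : E → ℚ) (a b : Inc ends) :
    Quotient.mk (gst ends g) a = Quotient.mk (gst ends g) b ↔ grel ends g a b :=
  ⟨fun h => eqvGen_of_equivalence (grel_equivalence ends g) (Quotient.exact h),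
   fun h => Quotient.sound (Relation.EqvGen.rel _ _ h)⟩

def lvQ (ends : E → Sym2 V) (g : E → ℚ) : QV ends g → ℚ :=
  Quotient.lift (fun a => g a.1.1) (fun a b h =>
    eqvGen_lift (fun x y (hxy : grel ends g x y) => hxy.1)
      (show Relation.EqvGen (grel ends g) a b from h))

@[simp] lemma lvQ_mk (ends : E → Sym2 V) (g : E → ℚ) (a : Inc ends) :
    lvQ ends g (Quotient.mk (gst ends g) a) = g a.1.1 := rfl

lemma sym2_minmax [LinearOrder V] (s : Sym2 V) : s(LamanPaper.sMin s, LamanPaper.sMax s) = s := by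
  induction s using Sym2.ind with
  | _ x y =>
    rcases le_total x y with h | h
    · simp [LamanPaper.sMin, LamanPaper.sMax, Sym2.lift_mk, min_eq_left h, max_eq_right h]
    · simp only [LamanPaper.sMin, LamanPaper.sMax, Sym2.lift_mk]
      simp only [min_eq_right h, max_eq_left h]
      exact Sym2.eq_swap

lemma lv_of_qEnds [LinearOrder V] {ends : E → Sym2 V} {g : E → ℚ} {e : E} {x y : QV ends g}
    (h : qEnds ends g e = s(x, y)) : lvQ ends g x = g e ∧ lvQ ends g y = g e := by
  unfold qEnds at h
  rw [Sym2.eq_iff] at h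
  rcases h with ⟨h1, h2⟩ | ⟨h1, h2⟩ <;> subst h1 <;> subst h2 <;> exact ⟨rfl, rfl⟩

lemma lv_adj [LinearOrder V] {ends : E → Sym2 V} {g : E → ℚ} {x y : QV ends g}
    (h : LamanPaper.adjRel (qEnds ends g) x y) : lvQ ends g x = lvQ ends g y := by
  obtain ⟨e, he⟩ := h
  exact ((lv_of_qEnds he).1).trans ((lv_of_qEnds he).2).symm

def lvC [LinearOrder V] (ends : E → Sym2 V) (g : E → ℚ) :
    Quotient (LamanPaper.ccSetoid (qEnds ends g)) → ℚ :=
  Quotient.lift (lvQ ends g) (fun a b h =>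
    eqvGen_lift (fun _ _ hxy => lv_adj hxy)
      (show Relation.EqvGen (LamanPaper.adjRel (qEnds ends g)) a b from h))

@[simp] lemma lvC_mk [LinearOrder V] (ends : E → Sym2 V) (g : E → ℚ) (x : QV ends g) :
    lvC ends g (Quotient.mk (LamanPaper.ccSetoid (qEnds ends g)) x) = lvQ ends g x := rfl

lemma cc_mk_eq_iff {X : Type} (ends2 : E → Sym2 X) (x y : X) :
    Quotient.mk (LamanPaper.ccSetoid ends2) x = Quotient.mk (LamanPaper.ccSetoid ends2) y ↔
      Relation.EqvGen (LamanPaper.adjRel ends2) x y :=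
  ⟨fun h => Quotient.exact h, fun h => Quotient.sound h⟩

end GQ

namespace GQ

variable {V E : Type}

section Level

variable [LinearOrder V] (ends : E → Sym2 V) (g : E → ℚ) (α : ℚ)

/-- the set of edges of level `> α` -/
def Sgt : Set E := {e : E | α < g e}

def toQA (hmin : ∀ e, α ≤ g e) : QV ends g → Quotient (stS ends (Sgt g α)) :=
  Quotient.lift (fun a => Quotient.mk (stS ends (Sgt g α)) a.1.2)
    (fun a b h =>
      eqvGen_lift (fun x y (hxy : grel ends g x y) =>
        (stS_mk_eq_iff ends (Sgt g α) x.1.2 y.1.2).mpr (Relation.EqvGen.mono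
          (fun u v huv => by
            obtain ⟨e, he1, he2⟩ := huv
            exact ⟨e, lt_of_le_of_lt (hmin _) he1, he2⟩) _ _ hxy.2))
        (show Relation.EqvGen (grel ends g) a b from h))

def toQB : QV ends g → Quotient (stS ends Set.univ) :=
  Quotient.lift (fun a => Quotient.mk (stS ends Set.univ) a.1.2)
    (fun a b h =>
      eqvGen_lift (fun x y (hxy : grel ends g x y) =>
        (stS_mk_eq_iff ends Set.univ x.1.2 y.1.2).mpr (Relation.EqvGen.mono
          (fun u v huv => by
            obtain ⟨e, _, he2⟩ := huv
            exact ⟨e, trivial, he2⟩) _ _ hxy.2))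
        (show Relation.EqvGen (grel ends g) a b from h))

def πAB : Quotient (stS ends (Sgt g α)) → Quotient (stS ends Set.univ) :=
  Quotient.lift (fun v => Quotient.mk (stS ends Set.univ) v)
    (fun u v h => Quotient.sound (Relation.EqvGen.mono
      (fun a b hab => by
        obtain ⟨e, _, h2⟩ := hab
        exact ⟨e, trivial, h2⟩)
      _ _ (show Relation.EqvGen (adjS ends (Sgt g α)) u v from h)))

lemma qEnds_mk {f : E} {u u' : V} (h : ends f = s(u, u')) (hu : u ∈ ends f)
    (hu' : u' ∈ ends f) :
    qEnds ends g f =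
      s(Quotient.mk (gst ends g) ⟨(f, u), hu⟩, Quotient.mk (gst ends g) ⟨(f, u'), hu'⟩) := by
  unfold qEnds
  rcases le_total u u' with hle | hle
  · have h1 : LamanPaper.sMin (ends f) = u := by
      rw [h]
      simp only [LamanPaper.sMin, Sym2.lift_mk]
      exact min_eq_left hle
    have h2 : LamanPaper.sMax (ends f) = u' := by
      rw [h]
      simp only [LamanPaper.sMax, Sym2.lift_mk]
      exact max_eq_right hle
    rw [Sym2.eq_iff]
    left
    exact ⟨congrArg _ (Subtype.ext (show (f, LamanPaper.sMin (ends f)) = (f, u) by rw [h1])),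
      congrArg _ (Subtype.ext (show (f, LamanPaper.sMax (ends f)) = (f, u') by rw [h2]))⟩
  · have h1 : LamanPaper.sMin (ends f) = u' := by
      rw [h]
      simp only [LamanPaper.sMin, Sym2.lift_mk]
      exact min_eq_right hle
    have h2 : LamanPaper.sMax (ends f) = u := by
      rw [h]
      simp only [LamanPaper.sMax, Sym2.lift_mk]
      exact max_eq_left hle
    rw [Sym2.eq_iff]
    right
    exact ⟨congrArg _ (Subtype.ext (show (f, LamanPaper.sMin (ends f)) = (f, u') by rw [h1])),
      congrArg _ (Subtype.ext (show (f, LamanPaper.sMax (ends f)) = (f, u) by rw [h2]))⟩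

lemma adj_mk {f : E} {u u' : V} (h : ends f = s(u, u')) (hu : u ∈ ends f) (hu' : u' ∈ ends f) :
    LamanPaper.adjRel (qEnds ends g) (Quotient.mk (gst ends g) ⟨(f, u), hu⟩)
      (Quotient.mk (gst ends g) ⟨(f, u'), hu'⟩) :=
  ⟨f, qEnds_mk ends g h hu hu'⟩

lemma qv_eq_of_level {p p' : Inc ends} (hp : g p.1.1 = α) (hp' : g p'.1.1 = α)
    (h : Relation.EqvGen (adjS ends (Sgt g α)) p.1.2 p'.1.2) :
    Quotient.mk (gst ends g) p = Quotient.mk (gst ends g) p' := by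
  refine (qv_mk_eq_iff ends g p p').mpr ⟨hp.trans hp'.symm, ?_⟩
  rw [hp]
  exact Relation.EqvGen.mono (fun u v huv => by
    obtain ⟨e, he1, he2⟩ := huv
    exact ⟨e, he1, he2⟩) _ _ h

def reach (u : V) : Prop :=
  ∃ p : Inc ends, g p.1.1 = α ∧ Relation.EqvGen (adjS ends (Sgt g α)) p.1.2 u

lemma reach_iff (hmin : ∀ e, α ≤ g e) {u u' : V}
    (h : Relation.EqvGen (adjS ends Set.univ) u u') :
    reach ends g α u ↔ reach ends g α u' := by
  induction h with
  | rel a b hab =>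
    obtain ⟨f, -, hf⟩ := hab
    rcases eq_or_lt_of_le (hmin f) with hf1 | hf1
    · constructor
      · intro _
        exact ⟨⟨(f, b), by rw [hf]; exact Sym2.mem_mk_right _ _⟩, hf1.symm,
          Relation.EqvGen.refl _⟩
      · intro _
        exact ⟨⟨(f, a), by rw [hf]; exact Sym2.mem_mk_left _ _⟩, hf1.symm,
          Relation.EqvGen.refl _⟩
    · have hS : Relation.EqvGen (adjS ends (Sgt g α)) a b :=
        Relation.EqvGen.rel _ _ ⟨f, hf1, hf⟩
      constructor
      · rintro ⟨p, h1, h2⟩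
        exact ⟨p, h1, Relation.EqvGen.trans _ _ _ h2 hS⟩
      · rintro ⟨p, h1, h2⟩
        exact ⟨p, h1, Relation.EqvGen.trans _ _ _ h2 (Relation.EqvGen.symm _ _ hS)⟩
  | refl a => exact Iff.rfl
  | symm a b _ ih => exact ih.symm
  | trans a b c _ _ ih1 ih2 => exact ih1.trans ih2

lemma key (hmin : ∀ e, α ≤ g e) {u u' : V}
    (h : Relation.EqvGen (adjS ends Set.univ) u u') :
    ∀ (p p' : Inc ends), g p.1.1 = α → g p'.1.1 = α →
      Relation.EqvGen (adjS ends (Sgt g α)) p.1.2 u →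
      Relation.EqvGen (adjS ends (Sgt g α)) p'.1.2 u' →
      Relation.EqvGen (LamanPaper.adjRel (qEnds ends g))
        (Quotient.mk (gst ends g) p) (Quotient.mk (gst ends g) p') := by
  induction h with
  | rel a b hab =>
    intro p p' hp hp' hpa hpb
    obtain ⟨f, -, hf⟩ := hab
    rcases eq_or_lt_of_le (hmin f) with hf1 | hf1
    · have ha : a ∈ ends f := by rw [hf]; exact Sym2.mem_mk_left _ _
      have hb : b ∈ ends f := by rw [hf]; exact Sym2.mem_mk_right _ _
      have e1 := qv_eq_of_level ends g α (p' := ⟨(f, a), ha⟩) hp hf1.symm hpa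
      have e2 := qv_eq_of_level ends g α (p' := ⟨(f, b), hb⟩) hp' hf1.symm hpb
      rw [e1, e2]
      exact Relation.EqvGen.rel _ _ (adj_mk ends g hf ha hb)
    · have hS : Relation.EqvGen (adjS ends (Sgt g α)) a b :=
        Relation.EqvGen.rel _ _ ⟨f, hf1, hf⟩
      have e1 : Quotient.mk (gst ends g) p = Quotient.mk (gst ends g) p' :=
        qv_eq_of_level ends g α hp hp'
          (Relation.EqvGen.trans _ _ _ hpa
            (Relation.EqvGen.trans _ _ _ hS (Relation.EqvGen.symm _ _ hpb)))
      rw [e1]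
      exact Relation.EqvGen.refl _
  | refl a =>
    intro p p' hp hp' h1 h2
    rw [qv_eq_of_level ends g α hp hp'
      (Relation.EqvGen.trans _ _ _ h1 (Relation.EqvGen.symm _ _ h2))]
    exact Relation.EqvGen.refl _
  | symm a b hab ih =>
    intro p p' hp hp' h1 h2
    exact Relation.EqvGen.symm _ _ (ih p' p hp' hp h2 h1)
  | trans a b c hab hbc ih1 ih2 =>
    intro p p' hp hp' h1 h2
    obtain ⟨pm, hm1, hm2⟩ := (reach_iff ends g α hmin hab).mp ⟨p, hp, h1⟩
    exact Relation.EqvGen.trans _ _ _ (ih1 p pm hp hm1 h1 hm2) (ih2 pm p' hm1 hp' hm2 h2)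

lemma eqvGen_S_of_not_reach (hmin : ∀ e, α ≤ g e) {u u' : V}
    (h : Relation.EqvGen (adjS ends Set.univ) u u') :
    ¬ reach ends g α u → Relation.EqvGen (adjS ends (Sgt g α)) u u' := by
  induction h with
  | rel a b hab =>
    intro hr
    obtain ⟨f, -, hf⟩ := hab
    rcases eq_or_lt_of_le (hmin f) with hf1 | hf1
    · exact absurd ⟨⟨(f, a), by rw [hf]; exact Sym2.mem_mk_left _ _⟩, hf1.symm,
        Relation.EqvGen.refl _⟩ hr
    · exact Relation.EqvGen.rel _ _ ⟨f, hf1, hf⟩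
  | refl a => intro _; exact Relation.EqvGen.refl _
  | symm a b hab ih =>
    intro hr
    have hra : ¬ reach ends g α a := fun h' => hr ((reach_iff ends g α hmin hab).mp h')
    exact Relation.EqvGen.symm _ _ (ih hra)
  | trans a b c hab hbc ih1 ih2 =>
    intro hr
    have hrb : ¬ reach ends g α b := fun h' => hr ((reach_iff ends g α hmin hab).mpr h')
    exact Relation.EqvGen.trans _ _ _ (ih1 hr) (ih2 hrb)

def TouchedA (a : Quotient (stS ends (Sgt g α))) : Prop :=
  ∃ p : Inc ends, g p.1.1 = α ∧ Quotient.mk (stS ends (Sgt g α)) p.1.2 = a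

def TouchedB (b : Quotient (stS ends Set.univ)) : Prop :=
  ∃ p : Inc ends, g p.1.1 = α ∧ Quotient.mk (stS ends Set.univ) p.1.2 = b

lemma card_untouched [Finite V] [Finite E] (hmin : ∀ e, α ≤ g e) :
    Nat.card {a : Quotient (stS ends (Sgt g α)) // ¬ TouchedA ends g α a} =
      Nat.card {b : Quotient (stS ends Set.univ) // ¬ TouchedB ends g α b} := by
  have hmap : ∀ a : Quotient (stS ends (Sgt g α)), ¬ TouchedA ends g α a →
      ¬ TouchedB ends g α (πAB ends g α a) := by
    intro a ha hb
    obtain ⟨v, rfl⟩ := a.exists_rep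
    obtain ⟨p, hp, hmk⟩ := hb
    have h1 : Relation.EqvGen (adjS ends Set.univ) p.1.2 v :=
      (stS_mk_eq_iff ends Set.univ p.1.2 v).mp hmk
    obtain ⟨p', hp', hS⟩ := (reach_iff ends g α hmin h1).mp ⟨p, hp, Relation.EqvGen.refl _⟩
    exact ha ⟨p', hp', Quotient.sound hS⟩
  refine Nat.card_eq_of_bijective (fun a => ⟨πAB ends g α a.1, hmap a.1 a.2⟩) ⟨?_, ?_⟩
  · rintro ⟨a, ha⟩ ⟨a', ha'⟩ hEq
    obtain ⟨v, rfl⟩ := a.exists_rep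
    obtain ⟨v', rfl⟩ := a'.exists_rep
    have h1 : Quotient.mk (stS ends Set.univ) v = Quotient.mk (stS ends Set.univ) v' :=
      congrArg Subtype.val hEq
    have h2 := (stS_mk_eq_iff ends Set.univ v v').mp h1
    have hnr : ¬ reach ends g α v := by
      rintro ⟨p, hp, hS⟩
      exact ha ⟨p, hp, Quotient.sound hS⟩
    exact Subtype.ext (Quotient.sound (eqvGen_S_of_not_reach ends g α hmin h2 hnr))
  · rintro ⟨b, hb⟩
    obtain ⟨v, rfl⟩ := b.exists_rep
    refine ⟨⟨Quotient.mk (stS ends (Sgt g α)) v, ?_⟩, rfl⟩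
    rintro ⟨p, hp, hmk⟩
    refine hb ⟨p, hp, Quotient.sound (Relation.EqvGen.mono
      (fun x y hxy => by
        obtain ⟨e, _, h2⟩ := hxy
        exact ⟨e, trivial, h2⟩)
      _ _ ((stS_mk_eq_iff ends (Sgt g α) p.1.2 v).mp hmk))⟩

lemma card_levelQV [Finite V] [Finite E] (hmin : ∀ e, α ≤ g e) :
    Nat.card {x : QV ends g // lvQ ends g x = α} =
      Nat.card {a : Quotient (stS ends (Sgt g α)) // TouchedA ends g α a} := by
  have hmap : ∀ x : QV ends g, lvQ ends g x = α → TouchedA ends g α (toQA ends g α hmin x) := by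
    intro x hx
    obtain ⟨p, rfl⟩ := x.exists_rep
    exact ⟨p, hx, rfl⟩
  refine Nat.card_eq_of_bijective (fun x => ⟨toQA ends g α hmin x.1, hmap x.1 x.2⟩) ⟨?_, ?_⟩
  · rintro ⟨x, hx⟩ ⟨y, hy⟩ hEq
    obtain ⟨p, rfl⟩ := x.exists_rep
    obtain ⟨q, rfl⟩ := y.exists_rep
    have h1 : Quotient.mk (stS ends (Sgt g α)) p.1.2 = Quotient.mk (stS ends (Sgt g α)) q.1.2 :=
      congrArg Subtype.val hEq
    have h2 := (stS_mk_eq_iff ends (Sgt g α) p.1.2 q.1.2).mp h1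
    exact Subtype.ext (qv_eq_of_level ends g α hx hy h2)
  · rintro ⟨a, p, hp, rfl⟩
    exact ⟨⟨Quotient.mk (gst ends g) p, hp⟩, rfl⟩

lemma toQB_adj {x y : QV ends g} (h : LamanPaper.adjRel (qEnds ends g) x y) :
    toQB ends g x = toQB ends g y := by
  obtain ⟨e, he⟩ := h
  unfold qEnds at he
  rw [Sym2.eq_iff] at he
  have hadj : Relation.EqvGen (adjS ends Set.univ)
      (LamanPaper.sMin (ends e)) (LamanPaper.sMax (ends e)) :=
    Relation.EqvGen.rel _ _ ⟨e, trivial, (sym2_minmax (ends e)).symm⟩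
  rcases he with ⟨h1, h2⟩ | ⟨h1, h2⟩ <;> rw [← h1, ← h2]
  · exact Quotient.sound hadj
  · exact Quotient.sound (Relation.EqvGen.symm _ _ hadj)

def ccToQB : Quotient (LamanPaper.ccSetoid (qEnds ends g)) → Quotient (stS ends Set.univ) :=
  Quotient.lift (toQB ends g)
    (fun x y h => eqvGen_lift (fun _ _ hxy => toQB_adj ends g hxy)
      (show Relation.EqvGen (LamanPaper.adjRel (qEnds ends g)) x y from h))

lemma card_levelCC [Finite V] [Finite E] (hmin : ∀ e, α ≤ g e) :
    Nat.card {y : Quotient (LamanPaper.ccSetoid (qEnds ends g)) // lvC ends g y = α} =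
      Nat.card {b : Quotient (stS ends Set.univ) // TouchedB ends g α b} := by
  have hmap : ∀ y, lvC ends g y = α → TouchedB ends g α (ccToQB ends g y) := by
    intro y hy
    obtain ⟨x, rfl⟩ := y.exists_rep
    obtain ⟨p, rfl⟩ := x.exists_rep
    exact ⟨p, hy, rfl⟩
  refine Nat.card_eq_of_bijective (fun y => ⟨ccToQB ends g y.1, hmap y.1 y.2⟩) ⟨?_, ?_⟩
  · rintro ⟨y, hy⟩ ⟨z, hz⟩ hEq
    obtain ⟨x, rfl⟩ := y.exists_rep
    obtain ⟨p, rfl⟩ := x.exists_rep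
    obtain ⟨x', rfl⟩ := z.exists_rep
    obtain ⟨p', rfl⟩ := x'.exists_rep
    have h1 : Quotient.mk (stS ends Set.univ) p.1.2 = Quotient.mk (stS ends Set.univ) p'.1.2 :=
      congrArg Subtype.val hEq
    have h2 := (stS_mk_eq_iff ends Set.univ p.1.2 p'.1.2).mp h1
    have h3 := key ends g α hmin h2 p p' hy hz (Relation.EqvGen.refl _) (Relation.EqvGen.refl _)
    exact Subtype.ext (Quotient.sound h3)
  · rintro ⟨b, p, hp, rfl⟩
    exact ⟨⟨Quotient.mk (LamanPaper.ccSetoid (qEnds ends g)) (Quotient.mk (gst ends g) p), hp⟩, rfl⟩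

end Level

end GQ

namespace GQ

set_option linter.unusedSectionVars false

variable {V E : Type}

section Restrict

variable [LinearOrder V] (ends : E → Sym2 V) (g : E → ℚ) (α : ℚ)

def ends' : {e : E // α < g e} → Sym2 V := fun e => ends e.1

def g' : {e : E // α < g e} → ℚ := fun e => g e.1

lemma grel_up {a b : Inc (ends' ends g α)} (h : grel (ends' ends g α) (g' g α) a b) :
    grel ends g ⟨(a.1.1.1, a.1.2), a.2⟩ ⟨(b.1.1.1, b.1.2), b.2⟩ := by
  refine ⟨h.1, ?_⟩
  exact Relation.EqvGen.mono (fun u v huv => by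
    obtain ⟨e, he1, he2⟩ := huv
    exact ⟨e.1, he1, he2⟩) _ _ h.2

def θmap : QV (ends' ends g α) (g' g α) → QV ends g :=
  Quotient.lift (fun a => Quotient.mk (gst ends g) ⟨(a.1.1.1, a.1.2), a.2⟩)
    (fun a b h =>
      eqvGen_lift
        (f := fun a : Inc (ends' ends g α) => Quotient.mk (gst ends g) ⟨(a.1.1.1, a.1.2), a.2⟩)
        (fun x y (hxy : grel (ends' ends g α) (g' g α) x y) =>
          (qv_mk_eq_iff ends g _ _).mpr (grel_up ends g α hxy))
        (show Relation.EqvGen (grel (ends' ends g α) (g' g α)) a b from h))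

lemma θmap_inj : Function.Injective (θmap ends g α) := by
  intro x y h
  obtain ⟨a, rfl⟩ := x.exists_rep
  obtain ⟨b, rfl⟩ := y.exists_rep
  have h1 := (qv_mk_eq_iff ends g ⟨(a.1.1.1, a.1.2), a.2⟩ ⟨(b.1.1.1, b.1.2), b.2⟩).mp h
  refine Quotient.sound (Relation.EqvGen.rel _ _ ⟨h1.1, ?_⟩)
  exact Relation.EqvGen.mono (fun u v huv => by
    obtain ⟨e, he1, he2⟩ := huv
    exact ⟨⟨e, lt_trans a.1.1.2 he1⟩, he1, he2⟩) _ _ h1.2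

lemma lvQ_θ (x : QV (ends' ends g α) (g' g α)) : α < lvQ ends g (θmap ends g α x) := by
  obtain ⟨a, rfl⟩ := x.exists_rep
  exact a.1.1.2

lemma θmap_surj (hmin : ∀ e, α ≤ g e) (x : QV ends g) (hx : ¬ lvQ ends g x = α) :
    ∃ x', θmap ends g α x' = x := by
  obtain ⟨p, rfl⟩ := x.exists_rep
  have hlt : α < g p.1.1 := lt_of_le_of_ne (hmin _) (Ne.symm hx)
  exact ⟨Quotient.mk (gst (ends' ends g α) (g' g α)) ⟨(⟨p.1.1, hlt⟩, p.1.2), p.2⟩, rfl⟩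

lemma card_ne_levelQV [Finite V] [Finite E] (hmin : ∀ e, α ≤ g e) :
    Nat.card {x : QV ends g // ¬ lvQ ends g x = α} =
      Nat.card (QV (ends' ends g α) (g' g α)) := by
  symm
  refine Nat.card_eq_of_bijective (fun x' => ⟨θmap ends g α x', (lvQ_θ ends g α x').ne'⟩)
    ⟨?_, ?_⟩
  · intro x' y' h
    exact θmap_inj ends g α (congrArg Subtype.val h)
  · rintro ⟨x, hx⟩
    obtain ⟨x', hx'⟩ := θmap_surj ends g α hmin x hx
    exact ⟨x', Subtype.ext hx'⟩

lemma adj_up {x y : QV (ends' ends g α) (g' g α)}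
    (h : LamanPaper.adjRel (qEnds (ends' ends g α) (g' g α)) x y) :
    LamanPaper.adjRel (qEnds ends g) (θmap ends g α x) (θmap ends g α y) := by
  obtain ⟨e, he⟩ := h
  refine ⟨e.1, ?_⟩
  unfold qEnds at he
  rw [Sym2.eq_iff] at he
  rcases he with ⟨h1, h2⟩ | ⟨h1, h2⟩ <;> rw [← h1, ← h2]
  · rfl
  · exact Sym2.eq_swap

def Θmap : Quotient (LamanPaper.ccSetoid (qEnds (ends' ends g α) (g' g α))) →
    Quotient (LamanPaper.ccSetoid (qEnds ends g)) :=
  Quotient.lift (fun x => Quotient.mk (LamanPaper.ccSetoid (qEnds ends g)) (θmap ends g α x))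
    (fun x y h =>
      eqvGen_lift
        (f := fun x => Quotient.mk (LamanPaper.ccSetoid (qEnds ends g)) (θmap ends g α x))
        (fun _ _ hxy =>
          (cc_mk_eq_iff (qEnds ends g) _ _).mpr
            (Relation.EqvGen.rel _ _ (adj_up ends g α hxy)))
        (show Relation.EqvGen (LamanPaper.adjRel (qEnds (ends' ends g α) (g' g α))) x y from h))

lemma ccP (hmin : ∀ e, α ≤ g e) {x y : QV ends g}
    (h : Relation.EqvGen (LamanPaper.adjRel (qEnds ends g)) x y) :
    ¬ lvQ ends g x = α → ∀ x' y', θmap ends g α x' = x → θmap ends g α y' = y →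
      Relation.EqvGen (LamanPaper.adjRel (qEnds (ends' ends g α) (g' g α))) x' y' := by
  induction h with
  | rel x y hxy =>
    intro hlv x' y' hx hy
    obtain ⟨e, he⟩ := hxy
    have hlve : lvQ ends g x = g e := (lv_of_qEnds he).1
    have he' : α < g e := lt_of_le_of_ne (hmin e) (fun hh => hlv (hlve.trans hh.symm))
    unfold qEnds at he
    rw [Sym2.eq_iff] at he
    rcases he with ⟨h1, h2⟩ | ⟨h1, h2⟩
    · have hx' : x' = Quotient.mk (gst (ends' ends g α) (g' g α))
          ⟨(⟨e, he'⟩, LamanPaper.sMin (ends e)), LamanPaper.sMin_mem _⟩ :=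
        θmap_inj ends g α (hx.trans h1.symm)
      have hy' : y' = Quotient.mk (gst (ends' ends g α) (g' g α))
          ⟨(⟨e, he'⟩, LamanPaper.sMax (ends e)), LamanPaper.sMax_mem _⟩ :=
        θmap_inj ends g α (hy.trans h2.symm)
      rw [hx', hy']
      exact Relation.EqvGen.rel _ _ ⟨⟨e, he'⟩, rfl⟩
    · have hx' : x' = Quotient.mk (gst (ends' ends g α) (g' g α))
          ⟨(⟨e, he'⟩, LamanPaper.sMax (ends e)), LamanPaper.sMax_mem _⟩ :=
        θmap_inj ends g α (hx.trans h2.symm)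
      have hy' : y' = Quotient.mk (gst (ends' ends g α) (g' g α))
          ⟨(⟨e, he'⟩, LamanPaper.sMin (ends e)), LamanPaper.sMin_mem _⟩ :=
        θmap_inj ends g α (hy.trans h1.symm)
      rw [hx', hy']
      exact Relation.EqvGen.rel _ _ ⟨⟨e, he'⟩, Sym2.eq_swap⟩
  | refl x =>
    intro _ x' y' hx hy
    rw [θmap_inj ends g α (hx.trans hy.symm)]
    exact Relation.EqvGen.refl _
  | symm x y hxy ih =>
    intro hlv x' y' hx hy
    have hlx : ¬ lvQ ends g x = α := by
      rw [eqvGen_lift (fun _ _ hh => lv_adj hh) hxy]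
      exact hlv
    exact Relation.EqvGen.symm _ _ (ih hlx y' x' hy hx)
  | trans x m y h1 h2 ih1 ih2 =>
    intro hlv x' y' hx hy
    have hlm : ¬ lvQ ends g m = α := by
      rw [← eqvGen_lift (fun _ _ hh => lv_adj hh) h1]
      exact hlv
    obtain ⟨m', hm⟩ := θmap_surj ends g α hmin m hlm
    exact Relation.EqvGen.trans _ _ _ (ih1 hlv x' m' hx hm) (ih2 hlm m' y' hm hy)

lemma card_ne_levelCC [Finite V] [Finite E] (hmin : ∀ e, α ≤ g e) :
    Nat.card {y : Quotient (LamanPaper.ccSetoid (qEnds ends g)) // ¬ lvC ends g y = α} =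
      Nat.card (Quotient (LamanPaper.ccSetoid (qEnds (ends' ends g α) (g' g α)))) := by
  symm
  have hlv : ∀ z, ¬ lvC ends g (Θmap ends g α z) = α := by
    intro z
    obtain ⟨x', rfl⟩ := z.exists_rep
    exact (lvQ_θ ends g α x').ne'
  refine Nat.card_eq_of_bijective (fun z => ⟨Θmap ends g α z, hlv z⟩) ⟨?_, ?_⟩
  · intro z w h
    obtain ⟨x', rfl⟩ := z.exists_rep
    obtain ⟨y', rfl⟩ := w.exists_rep
    have h1 : Quotient.mk (LamanPaper.ccSetoid (qEnds ends g)) (θmap ends g α x') =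
        Quotient.mk (LamanPaper.ccSetoid (qEnds ends g)) (θmap ends g α y') :=
      congrArg Subtype.val h
    have h2 := (cc_mk_eq_iff (qEnds ends g) _ _).mp h1
    exact Quotient.sound (ccP ends g α hmin h2 (lvQ_θ ends g α x').ne' x' y' rfl rfl)
  · rintro ⟨y, hy⟩
    obtain ⟨x, rfl⟩ := y.exists_rep
    obtain ⟨x', hx'⟩ := θmap_surj ends g α hmin x hy
    exact ⟨Quotient.mk (LamanPaper.ccSetoid (qEnds (ends' ends g α) (g' g α))) x',
      Subtype.ext (congrArg (Quotient.mk (LamanPaper.ccSetoid (qEnds ends g))) hx')⟩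

lemma card_stS_restrict :
    Nat.card (Quotient (stS (ends' ends g α) Set.univ)) =
      Nat.card (Quotient (stS ends (Sgt g α))) := by
  have hs : stS (ends' ends g α) Set.univ = stS ends (Sgt g α) := by
    apply Setoid.ext
    intro u v
    constructor
    · intro h
      exact Relation.EqvGen.mono (fun a b hab => by
        obtain ⟨e, -, he⟩ := hab
        exact ⟨e.1, e.2, he⟩) _ _ h
    · intro h
      exact Relation.EqvGen.mono (fun a b hab => by
        obtain ⟨e, he1, he2⟩ := hab
        exact ⟨⟨e, he1⟩, trivial, he2⟩) _ _ h
  rw [hs]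

end Restrict

end GQ

namespace GQ

set_option linter.unusedSectionVars false

variable {V : Type}

lemma main_empty [LinearOrder V] [Finite V] {E : Type} [Finite E] [IsEmpty E]
    (ends : E → Sym2 V) (g : E → ℚ) :
    Nat.card (QV ends g) + Nat.card (Quotient (stS ends Set.univ)) =
      Nat.card V + Nat.card (Quotient (LamanPaper.ccSetoid (qEnds ends g))) := by
  haveI hIE : IsEmpty (Inc ends) := ⟨fun a => IsEmpty.false a.1.1⟩
  haveI hQ : IsEmpty (QV ends g) :=
    ⟨fun q => Quotient.ind (motive := fun _ => False) (fun a => IsEmpty.false a) q⟩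
  haveI : IsEmpty (Quotient (LamanPaper.ccSetoid (qEnds ends g))) :=
    ⟨fun q => Quotient.ind (motive := fun _ => False) (fun x => IsEmpty.false x) q⟩
  have h1 : Nat.card (QV ends g) = 0 := Nat.card_of_isEmpty
  have h2 : Nat.card (Quotient (LamanPaper.ccSetoid (qEnds ends g))) = 0 := Nat.card_of_isEmpty
  have h3 : Nat.card V = Nat.card (Quotient (stS ends Set.univ)) := by
    refine Nat.card_eq_of_bijective (Quotient.mk (stS ends Set.univ)) ⟨?_, fun q => q.exists_rep⟩
    intro u v h
    have h' := (stS_mk_eq_iff ends Set.univ u v).mp h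
    clear h
    induction h' with
    | rel a b hab => obtain ⟨e, -, -⟩ := hab; exact isEmptyElim e
    | refl a => rfl
    | symm a b _ ih => exact ih.symm
    | trans a b c _ _ ih1 ih2 => exact ih1.trans ih2
  omega

lemma main_aux [LinearOrder V] [Finite V] :
    ∀ (n : ℕ) (E : Type) [Finite E] (ends : E → Sym2 V) (g : E → ℚ),
      (Set.finite_range g).toFinset.card ≤ n →
      Nat.card (QV ends g) + Nat.card (Quotient (stS ends Set.univ)) =
        Nat.card V + Nat.card (Quotient (LamanPaper.ccSetoid (qEnds ends g))) := by
  intro n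
  induction n with
  | zero =>
    intro E _ ends g hcard
    haveI : IsEmpty E := by
      by_contra hne
      rw [not_isEmpty_iff] at hne
      obtain ⟨e⟩ := hne
      have hmem : g e ∈ (Set.finite_range g).toFinset := by
        rw [Set.Finite.mem_toFinset]
        exact ⟨e, rfl⟩
      have := Finset.card_pos.mpr ⟨_, hmem⟩
      omega
    exact main_empty ends g
  | succ n ih =>
    intro E _ ends g hcard
    rcases isEmpty_or_nonempty E with hE | hE
    · exact main_empty ends g
    · obtain ⟨e0⟩ := hE
      have hne : ((Set.finite_range g).toFinset).Nonempty :=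
        ⟨g e0, by rw [Set.Finite.mem_toFinset]; exact ⟨e0, rfl⟩⟩
      set α := ((Set.finite_range g).toFinset).min' hne with hα
      have hmin : ∀ e, α ≤ g e := fun e =>
        Finset.min'_le _ _ (by rw [Set.Finite.mem_toFinset]; exact ⟨e, rfl⟩)
      have hαmem : α ∈ (Set.finite_range g).toFinset := Finset.min'_mem _ _
      have hsub : (Set.finite_range (g' g α)).toFinset ⊆
          ((Set.finite_range g).toFinset).erase α := by
        intro β hβ
        rw [Set.Finite.mem_toFinset] at hβ
        obtain ⟨e', rfl⟩ := hβ
        exact Finset.mem_erase.mpr ⟨(e'.2).ne',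
          by rw [Set.Finite.mem_toFinset]; exact ⟨e'.1, rfl⟩⟩
      have hcard' : (Set.finite_range (g' g α)).toFinset.card ≤ n := by
        have h1 := Finset.card_le_card hsub
        have h2 := Finset.card_erase_of_mem hαmem
        have h3 := Finset.card_pos.mpr ⟨α, hαmem⟩
        omega
      have IH := ih {e : E // α < g e} (ends' ends g α) (g' g α) hcard'
      have c1 := card_ne_levelQV ends g α hmin
      have c2 := card_levelQV ends g α hmin
      have c3 := card_ne_levelCC ends g α hmin
      have c4 := card_levelCC ends g α hmin
      have c5 := card_untouched ends g α hmin
      have c6 := card_stS_restrict ends g α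
      have s1 : Nat.card (QV ends g) =
          Nat.card {x : QV ends g // lvQ ends g x = α} +
            Nat.card {x : QV ends g // ¬ lvQ ends g x = α} :=
        card_split _
      have s2 : Nat.card (Quotient (LamanPaper.ccSetoid (qEnds ends g))) =
          Nat.card {y : Quotient (LamanPaper.ccSetoid (qEnds ends g)) // lvC ends g y = α} +
            Nat.card {y : Quotient (LamanPaper.ccSetoid (qEnds ends g)) // ¬ lvC ends g y = α} :=
        card_split _
      have s3 : Nat.card (Quotient (stS ends (Sgt g α))) =
          Nat.card {a : Quotient (stS ends (Sgt g α)) // TouchedA ends g α a} +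
            Nat.card {a : Quotient (stS ends (Sgt g α)) // ¬ TouchedA ends g α a} :=
        card_split _
      have s4 : Nat.card (Quotient (stS ends Set.univ)) =
          Nat.card {b : Quotient (stS ends Set.univ) // TouchedB ends g α b} +
            Nat.card {b : Quotient (stS ends Set.univ) // ¬ TouchedB ends g α b} :=
        card_split _
      omega

lemma main {E : Type} [LinearOrder V] [Finite V] [Finite E] (ends : E → Sym2 V) (g : E → ℚ) :
    Nat.card (QV ends g) + LamanPaper.numCC ends =
      Nat.card V + LamanPaper.numCC (qEnds ends g) := by
  have h := main_aux (Set.finite_range g).toFinset.card E ends g le_rfl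
  have h2 : stS ends Set.univ = LamanPaper.ccSetoid ends := by
    apply Setoid.ext
    intro u v
    constructor
    · intro hh
      exact Relation.EqvGen.mono (fun a b hab => by
        obtain ⟨e, -, he⟩ := hab
        exact ⟨e, he⟩) _ _ hh
    · intro hh
      exact Relation.EqvGen.mono (fun a b hab => by
        obtain ⟨e, he⟩ := hab
        exact ⟨e, trivial, he⟩) _ _ hh
  rw [h2] at h
  exact h

end GQ


/-- If `B` is pseudo-Laman and `d` is a bidistance on `B` compatible with
some weight vector `wt`, then the quotient bigraph `B_d` is pseudo-Laman as well. -/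
theorem statement14 (B : Bigraph) (hloop : ¬ B.HasLoop) (hpl : B.PseudoLaman)
    (ebar : B.ℰ) (wt : {e : B.ℰ // e ≠ ebar} → ℚ)
    (dV : ↥B.Pset → ℚ) (dW : ↥B.Qset → ℚ)
    (hd : B.IsBidistance ebar wt dV dW)
    (oV : LinearOrder (B.QVertG dV)) (oW : LinearOrder (B.QVertH dW)) :
    (B.quotBigraph dV dW oV oW).PseudoLaman := by
  letI := B.ordV
  letI := B.ordW
  haveI : Finite (B.QVertG dV) := Quotient.finite _
  haveI : Finite (B.QVertH dW) := Quotient.finite _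
  have hG : Nat.card (B.QVertG dV) + numCC B.τG = Nat.card B.V + numCC (B.quotEndsG dV) :=
    GQ.main B.τG (B.gvalG dV)
  have hH : Nat.card (B.QVertH dW) + numCC B.τH = Nat.card B.W + numCC (B.quotEndsH dW) :=
    GQ.main B.τH (B.gvalH dW)
  have le1 : numCC (B.quotEndsG dV) ≤ Nat.card (B.QVertG dV) := GQ.card_quot_le _
  have le2 : numCC B.τG ≤ Nat.card B.V := GQ.card_quot_le _
  have le3 : numCC (B.quotEndsH dW) ≤ Nat.card (B.QVertH dW) := GQ.card_quot_le _
  have le4 : numCC B.τH ≤ Nat.card B.W := GQ.card_quot_le _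
  have hpl' : (Nat.card B.V - numCC B.τG) + (Nat.card B.W - numCC B.τH) =
      Nat.card B.ℰ + 1 := hpl
  show (Nat.card (B.QVertG dV) - numCC (B.quotEndsG dV)) +
      (Nat.card (B.QVertH dW) - numCC (B.quotEndsH dW)) = Nat.card B.ℰ + 1
  omega


end LamanPaper
end
end

section
/- Let B=(G,H) be a pseudo-Laman bigraph with biedge set ℰ without self-loops, fix a biedge ē∈ℰ, and let wt=(−1,…,−1)∈ℚ^{ℰ∖{ē}}. Suppose B has Laman number N≥1 with respect to ē, let d=(d_V,d_W) be a bidistance on B compatible with wt, and suppose the quotient bigraph B_d has Laman number M≥1 with respect to the biedge corresponding to ē. Then both d_V and d_W take values only in {0,−1}. -/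
set_option maxHeartbeats 1000000

noncomputable section
open Classical

namespace LamanPaper

variable {V E : Type}

/-! ### Auxiliary lemmas for Statement 16 -/

theorem sMin_sMax_spec {α : Type} [LinearOrder α] (s : Sym2 α) :
    s(sMin s, sMax s) = s := by
  induction s using Sym2.ind with
  | _ x y =>
    simp only [sMin, sMax, Sym2.lift_mk]
    rcases le_total x y with h | h
    · rw [min_eq_left h, max_eq_right h]
    · rw [min_eq_right h, max_eq_left h, Sym2.eq_swap]

theorem sMin_ne_sMax {α : Type} [LinearOrder α] {s : Sym2 α} (h : ¬ s.IsDiag) :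
    sMin s ≠ sMax s := by
  induction s using Sym2.ind with
  | _ x y =>
    intro hm
    apply h
    rw [Sym2.mk_isDiag_iff]
    simp only [sMin, sMax, Sym2.lift_mk] at hm
    rcases le_total x y with h' | h'
    · rw [min_eq_left h', max_eq_right h'] at hm; exact hm
    · rw [min_eq_right h', max_eq_left h'] at hm; exact hm.symm

namespace Bigraph

variable (B : Bigraph)

/-- For a non-loop edge, the canonical ordered pair of its endpoints lies in `P`. -/
theorem canonP (e : B.ℰ) (h : ¬ (B.τG e).IsDiag) :
    ∃ p : ↥B.Pset, (p : B.V × B.V) = (B.eFstG e, B.eSndG e) ∧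
      s((p : B.V × B.V).1, (p : B.V × B.V).2) = B.τG e := by
  letI := B.ordV
  have h1 : B.eFstG e ≠ B.eSndG e := sMin_ne_sMax h
  have h2 : s(B.eFstG e, B.eSndG e) = B.τG e := sMin_sMax_spec _
  exact ⟨⟨(B.eFstG e, B.eSndG e), h1, e, h2.symm⟩, rfl, h2⟩

theorem canonQ (e : B.ℰ) (h : ¬ (B.τH e).IsDiag) :
    ∃ q : ↥B.Qset, (q : B.W × B.W) = (B.eFstH e, B.eSndH e) ∧
      s((q : B.W × B.W).1, (q : B.W × B.W).2) = B.τH e := by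
  letI := B.ordW
  have h1 : B.eFstH e ≠ B.eSndH e := sMin_ne_sMax h
  have h2 : s(B.eFstH e, B.eSndH e) = B.τH e := sMin_sMax_spec _
  exact ⟨⟨(B.eFstH e, B.eSndH e), h1, e, h2.symm⟩, rfl, h2⟩

/-- The value `gvalG` agrees with `dV` on any pair with the correct endpoints. -/
theorem gvalG_eq {dV : ↥B.Pset → ℚ} (hsym : B.BidistSymmG dV) (e : B.ℰ) (p : ↥B.Pset)
    (h : s((p : B.V × B.V).1, (p : B.V × B.V).2) = B.τG e) :
    B.gvalG dV e = dV p := by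
  have hex : ∃ p' : ↥B.Pset, s((p' : B.V × B.V).1, (p' : B.V × B.V).2) = B.τG e := ⟨p, h⟩
  unfold gvalG
  rw [dif_pos hex]
  have hs := hex.choose_spec.trans h.symm
  rw [Sym2.eq_iff] at hs
  rcases hs with ⟨h1, h2⟩ | ⟨h1, h2⟩
  · have : (hex.choose : B.V × B.V) = (p : B.V × B.V) := Prod.ext h1 h2
    rw [Subtype.ext this]
  · exact hsym p hex.choose (Prod.ext h1 h2)

theorem gvalH_eq {dW : ↥B.Qset → ℚ} (hsym : B.BidistSymmH dW) (e : B.ℰ) (q : ↥B.Qset)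
    (h : s((q : B.W × B.W).1, (q : B.W × B.W).2) = B.τH e) :
    B.gvalH dW e = dW q := by
  have hex : ∃ q' : ↥B.Qset, s((q' : B.W × B.W).1, (q' : B.W × B.W).2) = B.τH e := ⟨q, h⟩
  unfold gvalH
  rw [dif_pos hex]
  have hs := hex.choose_spec.trans h.symm
  rw [Sym2.eq_iff] at hs
  rcases hs with ⟨h1, h2⟩ | ⟨h1, h2⟩
  · have : (hex.choose : B.W × B.W) = (q : B.W × B.W) := Prod.ext h1 h2
    rw [Subtype.ext this]
  · exact hsym q hex.choose (Prod.ext h1 h2)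

theorem gvalG_ebar {ebar : B.ℰ} {dV : ↥B.Pset → ℚ} {dW : ↥B.Qset → ℚ}
    (hloop : ¬ B.HasLoop) (hsym : B.BidistSymmG dV) (hbase : B.BidistBase ebar dV dW) :
    B.gvalG dV ebar = 0 := by
  obtain ⟨p, _, hp⟩ := B.canonP ebar (fun h => hloop (Or.inl ⟨ebar, h⟩))
  rw [B.gvalG_eq hsym ebar p hp]
  exact hbase.1 p hp

theorem gvalH_ebar {ebar : B.ℰ} {dV : ↥B.Pset → ℚ} {dW : ↥B.Qset → ℚ}
    (hloop : ¬ B.HasLoop) (hsym : B.BidistSymmH dW) (hbase : B.BidistBase ebar dV dW) :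
    B.gvalH dW ebar = 0 := by
  obtain ⟨q, _, hq⟩ := B.canonQ ebar (fun h => hloop (Or.inr ⟨ebar, h⟩))
  rw [B.gvalH_eq hsym ebar q hq]
  exact hbase.2 q hq

theorem gval_sum {ebar : B.ℰ} {wt : {e : B.ℰ // e ≠ ebar} → ℚ}
    {dV : ↥B.Pset → ℚ} {dW : ↥B.Qset → ℚ} (hloop : ¬ B.HasLoop)
    (hsymG : B.BidistSymmG dV) (hsymH : B.BidistSymmH dW)
    (hsum : B.BidistSum ebar wt dV dW) (e : B.ℰ) (he : e ≠ ebar) :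
    B.gvalG dV e + B.gvalH dW e = wt ⟨e, he⟩ := by
  obtain ⟨p, _, hp⟩ := B.canonP e (fun h => hloop (Or.inl ⟨e, h⟩))
  obtain ⟨q, _, hq⟩ := B.canonQ e (fun h => hloop (Or.inr ⟨e, h⟩))
  rw [B.gvalG_eq hsymG e p hp, B.gvalH_eq hsymH e q hq]
  exact hsum ⟨e, he⟩ p q hp hq

/-- The level of a vertex class of `G_{d_V}`. -/
def levG (dV : ↥B.Pset → ℚ) : B.QVertG dV → ℚ :=
  Quotient.lift (fun a : B.IncG => B.gvalG dV a.1.1) (by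
    intro a b hab
    induction hab with
    | rel _ _ h => exact h.1
    | refl => rfl
    | symm _ _ _ ih => exact ih.symm
    | trans _ _ _ _ _ ih1 ih2 => exact ih1.trans ih2)

/-- The level of a vertex class of `H_{d_W}`. -/
def levH (dW : ↥B.Qset → ℚ) : B.QVertH dW → ℚ :=
  Quotient.lift (fun a : B.IncH => B.gvalH dW a.1.1) (by
    intro a b hab
    induction hab with
    | rel _ _ h => exact h.1
    | refl => rfl
    | symm _ _ _ ih => exact ih.symm
    | trans _ _ _ _ _ ih1 ih2 => exact ih1.trans ih2)

theorem levG_mem (dV : ↥B.Pset → ℚ) (e : B.ℰ) (c : B.QVertG dV)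
    (hc : c ∈ B.quotEndsG dV e) : B.levG dV c = B.gvalG dV e := by
  have hc := Sym2.mem_iff.mp hc
  rcases hc with h | h <;> rw [h] <;> rfl

theorem levH_mem (dW : ↥B.Qset → ℚ) (e : B.ℰ) (c : B.QVertH dW)
    (hc : c ∈ B.quotEndsH dW e) : B.levH dW c = B.gvalH dW e := by
  have hc := Sym2.mem_iff.mp hc
  rcases hc with h | h <;> rw [h] <;> rfl

end Bigraph

/-- The key lemma: if the quotient bigraph `B_d` has a positive Laman number, then all the
levels `gvalG dV e` of biedges `e ≠ ebar` lie in `{0, -1}`. -/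
theorem gval_level (B : Bigraph) (hloop : ¬ B.HasLoop) (ebar : B.ℰ)
    (dV : ↥B.Pset → ℚ) (dW : ↥B.Qset → ℚ)
    (hsymG : B.BidistSymmG dV) (hsymH : B.BidistSymmH dW)
    (hsum : B.BidistSum ebar (fun _ => (-1 : ℚ)) dV dW)
    (hbase : B.BidistBase ebar dV dW)
    (M : ℕ) (hM : 1 ≤ M)
    (oV : LinearOrder (B.QVertG dV)) (oW : LinearOrder (B.QVertH dW))
    (hBd : (B.quotBigraph dV dW oV oW).HasLamanNumber ebar M)
    (e : B.ℰ) (he : e ≠ ebar) : B.gvalG dV e = 0 ∨ B.gvalG dV e = -1 := by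
  by_contra hcon
  push_neg at hcon
  obtain ⟨h0, h1⟩ := hcon
  rcases hBd with ⟨_, hM0⟩ | ⟨hql, P, hP0, hPgen⟩
  · omega
  set B' := B.quotBigraph dV dW oV oW with hB'
  have hqlG : ∀ e', ¬ (B'.τG e').IsDiag := fun e' h => hql (Or.inl ⟨e', h⟩)
  have hqlH : ∀ e', ¬ (B'.τH e').IsDiag := fun e' h => hql (Or.inr ⟨e', h⟩)
  -- choose a generic parameter with `lam e ≠ 0`
  have hPX : (P * MvPolynomial.X ⟨e, he⟩ : MvPolynomial {e' : B.ℰ // e' ≠ ebar} ℂ) ≠ 0 :=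
    by haveI : NoZeroDivisors (MvPolynomial {e' : B.ℰ // e' ≠ ebar} ℂ) :=
         MvPolynomial.instNoZeroDivisors
       exact mul_ne_zero (M₀ := MvPolynomial {e' : B.ℰ // e' ≠ ebar} ℂ) hP0 (MvPolynomial.X_ne_zero _)
  obtain ⟨lam, hlam⟩ :
      ∃ lam, MvPolynomial.eval lam (P * MvPolynomial.X ⟨e, he⟩ :
        MvPolynomial {e' : B.ℰ // e' ≠ ebar} ℂ) ≠ 0 := by
    by_contra hcc
    push_neg at hcc
    exact hPX (MvPolynomial.funext fun x => by rw [hcc x, map_zero])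
  erw [map_mul, MvPolynomial.eval_X] at hlam
  have hPl : MvPolynomial.eval lam P ≠ 0 := fun h => hlam (by rw [h, zero_mul])
  have hle : lam ⟨e, he⟩ ≠ 0 := fun h => hlam (by erw [h, mul_zero])
  obtain ⟨hfin, hcard⟩ := hPgen lam hPl
  -- a solution exists
  have hne : Nonempty ↥(B'.ZSet ebar lam) := by
    have hc2 : Nat.card ↥(B'.ZSet ebar lam) = M := hcard
    have : Nat.card ↥(B'.ZSet ebar lam) ≠ 0 := by omega
    exact (Nat.card_ne_zero.mp this).1
  obtain ⟨⟨xy, hxy⟩⟩ := hne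
  obtain ⟨hz1, hz2, hz3, hz4, hz5⟩ := hxy
  -- levels
  have hG0 : B.gvalG dV ebar = 0 := B.gvalG_ebar hloop hsymG hbase
  have hH0 : B.gvalH dW ebar = 0 := B.gvalH_ebar hloop hsymH hbase
  have hGH : ∀ e', e' ≠ ebar → B.gvalH dW e' = -1 - B.gvalG dV e' := by
    intro e' he'
    have := B.gval_sum hloop hsymG hsymH hsum e' he'
    linarith
  -- constancy of levels along walks in G'
  have walkG : ∀ (n : ℕ) (u : ℕ → B'.V) (w : Fin n → ↥B'.Pset),
      (∀ i : Fin n, (w i : B'.V × B'.V) = (u i.1, u (i.1 + 1))) →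
      ∀ i : Fin n, B.levG dV ((w i : B'.V × B'.V).1) = B.levG dV (u 0) := by
    intro n u w hw
    have step : ∀ j, (hj : j < n) → B.levG dV (u (j + 1)) = B.levG dV (u j) := by
      intro j hj
      obtain ⟨hnep, e', he'⟩ := (w ⟨j, hj⟩).2
      have h1 : ((w ⟨j, hj⟩ : B'.V × B'.V)).1 = u j := by rw [hw ⟨j, hj⟩]
      have h2 : ((w ⟨j, hj⟩ : B'.V × B'.V)).2 = u (j + 1) := by rw [hw ⟨j, hj⟩]
      rw [h1, h2] at he'
      have m1 := B.levG_mem dV e' (u j)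
        (by show u j ∈ B'.τG e'; rw [he']; exact Sym2.mem_mk_left _ _)
      have m2 := B.levG_mem dV e' (u (j + 1))
        (by show u (j + 1) ∈ B'.τG e'; rw [he']; exact Sym2.mem_mk_right _ _)
      rw [m1, m2]
    have key : ∀ k, k < n → B.levG dV (u k) = B.levG dV (u 0) := by
      intro k
      induction k with
      | zero => intro _; rfl
      | succ m ih =>
        intro hm
        exact (step m (Nat.lt_of_succ_lt hm)).trans (ih (Nat.lt_of_succ_lt hm))
    intro i
    have h1 : ((w i : B'.V × B'.V)).1 = u i.1 := by rw [hw i]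
    rw [h1]
    exact key i.1 i.2
  have walkH : ∀ (n : ℕ) (u : ℕ → B'.W) (w : Fin n → ↥B'.Qset),
      (∀ i : Fin n, (w i : B'.W × B'.W) = (u i.1, u (i.1 + 1))) →
      ∀ i : Fin n, B.levH dW ((w i : B'.W × B'.W).1) = B.levH dW (u 0) := by
    intro n u w hw
    have step : ∀ j, (hj : j < n) → B.levH dW (u (j + 1)) = B.levH dW (u j) := by
      intro j hj
      obtain ⟨hnep, e', he'⟩ := (w ⟨j, hj⟩).2
      have h1 : ((w ⟨j, hj⟩ : B'.W × B'.W)).1 = u j := by rw [hw ⟨j, hj⟩]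
      have h2 : ((w ⟨j, hj⟩ : B'.W × B'.W)).2 = u (j + 1) := by rw [hw ⟨j, hj⟩]
      rw [h1, h2] at he'
      have m1 := B.levH_mem dW e' (u j)
        (by show u j ∈ B'.τH e'; rw [he']; exact Sym2.mem_mk_left _ _)
      have m2 := B.levH_mem dW e' (u (j + 1))
        (by show u (j + 1) ∈ B'.τH e'; rw [he']; exact Sym2.mem_mk_right _ _)
      rw [m1, m2]
    have key : ∀ k, k < n → B.levH dW (u k) = B.levH dW (u 0) := by
      intro k
      induction k with
      | zero => intro _; rfl
      | succ m ih =>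
        intro hm
        exact (step m (Nat.lt_of_succ_lt hm)).trans (ih (Nat.lt_of_succ_lt hm))
    intro i
    have h1 : ((w i : B'.W × B'.W)).1 = u i.1 := by rw [hw i]
    rw [h1]
    exact key i.1 i.2
  -- the scaled family of solutions
  set F : ℕ → (↥B'.Pset → ℂ) × (↥B'.Qset → ℂ) := fun n =>
    (fun p => if B.levG dV ((p : B'.V × B'.V).1) = B.gvalG dV e
        then ((n : ℂ) + 1) * xy.1 p else xy.1 p,
     fun q => if B.levH dW ((q : B'.W × B'.W).1) = -1 - B.gvalG dV e
        then ((n : ℂ) + 1)⁻¹ * xy.2 q else xy.2 q) with hF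
  have ht0 : ∀ n : ℕ, ((n : ℂ) + 1) ≠ 0 := fun n => by
    exact_mod_cast (Nat.cast_ne_zero (R := ℂ)).mpr (Nat.succ_ne_zero n)
  have hmem : ∀ n : ℕ, F n ∈ B'.ZSet ebar lam := by
    intro n
    refine ⟨?_, ?_, ?_, ?_, ?_⟩
    · -- normalization in G
      intro p hp
      show (if B.levG dV ((p : B'.V × B'.V).1) = B.gvalG dV e
          then ((n : ℂ) + 1) * xy.1 p else xy.1 p) = 1
      rw [if_neg, hz1 p hp]
      rw [hp]
      rw [B.levG_mem dV ebar (B'.eFstG ebar) (B'.eFstG_mem ebar), hG0]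
      exact fun hh => h0 hh.symm
    · -- normalization in H
      intro q hq
      show (if B.levH dW ((q : B'.W × B'.W).1) = -1 - B.gvalG dV e
          then ((n : ℂ) + 1)⁻¹ * xy.2 q else xy.2 q) = 1
      rw [if_neg, hz2 q hq]
      rw [hq]
      rw [B.levH_mem dW ebar (B'.eFstH ebar) (B'.eFstH_mem ebar), hH0]
      intro hh
      exact h1 (by linarith)
    · -- the product equations
      intro e' p q hp hq
      have hpl : B.levG dV ((p : B'.V × B'.V).1) = B.gvalG dV e'.1 := by
        rw [hp]
        exact B.levG_mem dV e'.1 (B'.eFstG e'.1) (B'.eFstG_mem e'.1)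
      have hql' : B.levH dW ((q : B'.W × B'.W).1) = B.gvalH dW e'.1 := by
        rw [hq]
        exact B.levH_mem dW e'.1 (B'.eFstH e'.1) (B'.eFstH_mem e'.1)
      have hsum' := hGH e'.1 e'.2
      show (if B.levG dV ((p : B'.V × B'.V).1) = B.gvalG dV e
          then ((n : ℂ) + 1) * xy.1 p else xy.1 p) *
        (if B.levH dW ((q : B'.W × B'.W).1) = -1 - B.gvalG dV e
          then ((n : ℂ) + 1)⁻¹ * xy.2 q else xy.2 q) = lam e'
      by_cases hc : B.gvalG dV e'.1 = B.gvalG dV e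
      · rw [if_pos (hpl.trans hc), if_pos (by rw [hql', hsum', hc]),
          mul_mul_mul_comm, mul_inv_cancel₀ (ht0 n), one_mul]
        exact hz3 e' p q hp hq
      · rw [if_neg (by rw [hpl]; exact hc),
          if_neg (by rw [hql', hsum']; intro hh; exact hc (by linarith))]
        exact hz3 e' p q hp hq
    · -- closed walks in G
      intro n' u w hw hcl
      show (∑ i, if B.levG dV ((w i : B'.V × B'.V).1) = B.gvalG dV e
          then ((n : ℂ) + 1) * xy.1 (w i) else xy.1 (w i)) = 0
      by_cases hc : ∃ i : Fin n', B.levG dV ((w i : B'.V × B'.V).1) = B.gvalG dV e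
      · obtain ⟨i₀, hi₀⟩ := hc
        have hall : ∀ i : Fin n', B.levG dV ((w i : B'.V × B'.V).1) = B.gvalG dV e :=
          fun i => (walkG n' u w hw i).trans ((walkG n' u w hw i₀).symm.trans hi₀)
        rw [Finset.sum_congr rfl (fun i _ => if_pos (hall i)), ← Finset.mul_sum,
          hz4 n' u w hw hcl, mul_zero]
      · push_neg at hc
        rw [Finset.sum_congr rfl (fun i _ => if_neg (hc i))]
        exact hz4 n' u w hw hcl
    · -- closed walks in H
      intro n' u w hw hcl
      show (∑ i, if B.levH dW ((w i : B'.W × B'.W).1) = -1 - B.gvalG dV e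
          then ((n : ℂ) + 1)⁻¹ * xy.2 (w i) else xy.2 (w i)) = 0
      by_cases hc : ∃ i : Fin n', B.levH dW ((w i : B'.W × B'.W).1) = -1 - B.gvalG dV e
      · obtain ⟨i₀, hi₀⟩ := hc
        have hall : ∀ i : Fin n', B.levH dW ((w i : B'.W × B'.W).1) = -1 - B.gvalG dV e :=
          fun i => (walkH n' u w hw i).trans ((walkH n' u w hw i₀).symm.trans hi₀)
        rw [Finset.sum_congr rfl (fun i _ => if_pos (hall i)), ← Finset.mul_sum,
          hz5 n' u w hw hcl, mul_zero]
      · push_neg at hc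
        rw [Finset.sum_congr rfl (fun i _ => if_neg (hc i))]
        exact hz5 n' u w hw hcl
  -- injectivity of the family
  obtain ⟨p₀, hp₀, _⟩ := B'.canonP e (hqlG e)
  obtain ⟨q₀, hq₀, _⟩ := B'.canonQ e (hqlH e)
  have hx0 : xy.1 p₀ ≠ 0 := by
    intro h
    have := hz3 ⟨e, he⟩ p₀ q₀ hp₀ hq₀
    rw [h, zero_mul] at this
    exact hle this.symm
  have hlevp₀ : B.levG dV ((p₀ : B'.V × B'.V).1) = B.gvalG dV e := by
    rw [hp₀]
    exact B.levG_mem dV e (B'.eFstG e) (B'.eFstG_mem e)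
  have hinj : Function.Injective F := by
    intro a b hab
    have hx := congrFun (congrArg Prod.fst hab) p₀
    simp only [hF] at hx
    rw [if_pos hlevp₀, if_pos hlevp₀] at hx
    have := mul_right_cancel₀ hx0 hx
    have : (a : ℂ) = (b : ℂ) := by linear_combination this
    exact_mod_cast this
  exact Set.infinite_of_injective_forall_mem hinj hmem hfin


/-- If `B` has a positive Laman number with respect to `ē`,
`d` is a bidistance compatible with the weight vector `(-1,…,-1)` and the quotient bigraph
`B_d` has a positive Laman number as well, then `d_V` and `d_W` take values in `{0, -1}`. -/
theorem statement16 (B : Bigraph) (hloop : ¬ B.HasLoop) (hpl : B.PseudoLaman)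
    (ebar : B.ℰ) (dV : ↥B.Pset → ℚ) (dW : ↥B.Qset → ℚ)
    (hd : B.IsBidistance ebar (fun _ => (-1 : ℚ)) dV dW)
    (N : ℕ) (hN : 1 ≤ N) (hB : B.HasLamanNumber ebar N)
    (M : ℕ) (hM : 1 ≤ M)
    (oV : LinearOrder (B.QVertG dV)) (oW : LinearOrder (B.QVertH dW))
    (hBd : (B.quotBigraph dV dW oV oW).HasLamanNumber ebar M) :
    (∀ p, dV p = 0 ∨ dV p = -1) ∧ (∀ q, dW q = 0 ∨ dW q = -1) := by
  obtain ⟨hsymG, hsymH, hsum, hbase, hminG, hminH⟩ := hd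
  constructor
  · intro p
    obtain ⟨hnep, e', he'⟩ := p.2
    by_cases hc : e' = ebar
    · left
      exact hbase.1 p (hc ▸ he').symm
    · have hgv := B.gvalG_eq hsymG e' p he'.symm
      rcases gval_level B hloop ebar dV dW hsymG hsymH hsum hbase M hM oV oW hBd e' hc
        with h | h
      · left; rw [← hgv]; exact h
      · right; rw [← hgv]; exact h
  · intro q
    obtain ⟨hneq, e', he'⟩ := q.2
    by_cases hc : e' = ebar
    · left
      exact hbase.2 q (hc ▸ he').symm
    · have hgv := B.gvalH_eq hsymH e' q he'.symm
      have hsum' := B.gval_sum hloop hsymG hsymH hsum e' hc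
      rcases gval_level B hloop ebar dV dW hsymG hsymH hsum hbase M hM oV oW hBd e' hc
        with h | h
      · right; rw [← hgv]; linarith
      · left; rw [← hgv]; linarith

end LamanPaper
end
end
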